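/- arXiv:quant-ph/9611015 — 5 statements merged into one kernel-verified Lean document; each statement's English description precedes it below -/
import Mathlib

section
/- Let 𝓗 be a complex Hilbert space, τ a normalized POV-measure on the Borel sets of ℝ with values in the bounded operators on 𝓗, and U : ℝ → B(𝓗) a one-parameter unitary group satisfying the positive-energy condition, such that (τ, U) is a covariance system: U(λ) τ(X) U(λ)* = τ(X + λ) for every Borel set X ⊆ ℝ and every λ ∈ ℝ. Then for every nonzero φ ∈ 𝓗 and every pair of reals a < b one has ⟨φ, τ((a, b]) φ⟩ > 0. -/
open MeasureTheory Complex Filter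
open Set Topology
open scoped InnerProductSpace ComplexConjugate


noncomputable def bvU (ζ : ℂ) : ℂ := Complex.exp ((Real.pi/2 : ℝ) * (ζ+1) * Complex.I)

noncomputable def bvPsi (a b : ℝ) (ζ : ℂ) : ℂ := ((b:ℂ) - (a:ℂ) * bvU ζ) / (1 - bvU ζ)

lemma bvU_re_im (ζ : ℂ) :
    (bvU ζ).re = Real.exp (-(Real.pi/2) * ζ.im) * Real.cos (Real.pi/2 * (ζ.re+1)) ∧
    (bvU ζ).im = Real.exp (-(Real.pi/2) * ζ.im) * Real.sin (Real.pi/2 * (ζ.re+1)) := by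
  have h : ((Real.pi/2 : ℝ) * (ζ+1) * Complex.I).re = -(Real.pi/2) * ζ.im ∧
      ((Real.pi/2 : ℝ) * (ζ+1) * Complex.I).im = Real.pi/2 * (ζ.re+1) := by
    constructor <;> simp [Complex.mul_re, Complex.mul_im] <;> ring
  constructor
  · rw [bvU, Complex.exp_re, h.1, h.2]
  · rw [bvU, Complex.exp_im, h.1, h.2]

lemma bvU_re_nonpos {ζ : ℂ} (h : ζ.re ∈ Icc (0:ℝ) 1) : (bvU ζ).re ≤ 0 := by
  rw [(bvU_re_im ζ).1]
  apply mul_nonpos_of_nonneg_of_nonpos (Real.exp_nonneg _)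
  apply Real.cos_nonpos_of_pi_div_two_le_of_le
  · nlinarith [Real.pi_pos, h.1]
  · nlinarith [Real.pi_pos, h.2]

lemma bvU_im_nonneg {ζ : ℂ} (h : ζ.re ∈ Icc (0:ℝ) 1) : 0 ≤ (bvU ζ).im := by
  rw [(bvU_re_im ζ).2]
  apply mul_nonneg (Real.exp_nonneg _)
  apply Real.sin_nonneg_of_nonneg_of_le_pi <;> nlinarith [Real.pi_pos, h.1, h.2]

lemma bvU_im_pos {ζ : ℂ} (h : ζ.re ∈ Ioo (0:ℝ) 1) : 0 < (bvU ζ).im := by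
  rw [(bvU_re_im ζ).2]
  apply mul_pos (Real.exp_pos _)
  apply Real.sin_pos_of_pos_of_lt_pi <;> nlinarith [Real.pi_pos, h.1, h.2]

lemma bvU_ne_one {ζ : ℂ} (h : ζ.re ∈ Icc (0:ℝ) 1) : 1 - bvU ζ ≠ 0 := by
  intro hc
  have : (1 - bvU ζ).re = 0 := by rw [hc]; simp
  have h2 := bvU_re_nonpos h
  simp [Complex.sub_re] at this
  linarith

lemma bvPsi_im {a b : ℝ} {ζ : ℂ} (h : ζ.re ∈ Icc (0:ℝ) 1) :
    (bvPsi a b ζ).im = (b - a) * (bvU ζ).im / Complex.normSq (1 - bvU ζ) := by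
  rw [bvPsi, Complex.div_im]
  have h1 : ((b:ℂ) - (a:ℂ) * bvU ζ).im = -(a * (bvU ζ).im) := by
    simp [Complex.sub_im, Complex.mul_im]
  have h2 : ((b:ℂ) - (a:ℂ) * bvU ζ).re = b - a * (bvU ζ).re := by
    simp [Complex.sub_re, Complex.mul_re]
  rw [h1, h2]
  simp [Complex.sub_re, Complex.sub_im]
  ring

lemma bvU_differentiable : Differentiable ℂ bvU := by
  unfold bvU
  apply Complex.differentiable_exp.comp
  fun_prop

lemma bvPsi_differentiableAt {a b : ℝ} {ζ : ℂ} (h : ζ.re ∈ Icc (0:ℝ) 1) :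
    DifferentiableAt ℂ (bvPsi a b) ζ := by
  apply DifferentiableAt.div
  · exact (differentiableAt_const _).sub ((differentiableAt_const _).mul (bvU_differentiable ζ))
  · exact (differentiableAt_const _).sub (bvU_differentiable ζ)
  · exact bvU_ne_one h

lemma bvPsi_re_one {a b : ℝ} (hab : a < b) {ζ : ℂ} (hζ : ζ.re = 1) :
    ∃ r : ℝ, a < r ∧ r < b ∧ bvPsi a b ζ = (r : ℂ) := by
  set t : ℝ := Real.exp (-(Real.pi/2) * ζ.im) with ht
  have htpos : 0 < t := Real.exp_pos _
  have hu : bvU ζ = -(t:ℂ) := by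
    have harg : (Real.pi/2 : ℝ) * (ζ+1) * Complex.I
        = ((-(Real.pi/2) * ζ.im : ℝ) : ℂ) + (Real.pi : ℝ) * Complex.I := by
      apply Complex.ext
      · simp [Complex.mul_re, Complex.mul_im]
      · simp [Complex.mul_re, Complex.mul_im, hζ]
        ring
    rw [bvU, harg, Complex.exp_add, Complex.exp_pi_mul_I, ht]
    rw [← Complex.ofReal_exp]
    ring
  refine ⟨(b + a*t)/(1+t), ?_, ?_, ?_⟩
  · rw [lt_div_iff₀ (by linarith)]; nlinarith
  · rw [div_lt_iff₀ (by linarith)]; nlinarith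
  · rw [bvPsi, hu]
    have h1 : ((1:ℂ) + t) ≠ 0 := by
      intro hc
      have : (1 + (t:ℂ)).re = 0 := by rw [hc]; simp
      simp at this; linarith
    push_cast
    ring_nf

lemma bv_main {F : ℂ → ℂ} {C a b : ℝ} (hab : a < b)
    (hbd : ∀ z : ℂ, 0 ≤ z.im → ‖F z‖ ≤ C)
    (hcont : ContinuousOn F {z : ℂ | 0 ≤ z.im})
    (hdiff : DifferentiableOn ℂ F {z : ℂ | 0 < z.im})
    (hvan : ∀ x : ℝ, x ∈ Set.Icc a b → F (x:ℂ) = 0) :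
    ∀ t : ℝ, F (t : ℂ) = 0 := by
  have hC0 : 0 ≤ C := le_trans (norm_nonneg _) (hbd Complex.I (by simp))
  set ψ : ℂ → ℂ := bvPsi a b with hψ
  set G : ℂ → ℂ := fun ζ => F (ψ ζ) with hG
  have hmapsIcc : ∀ ζ : ℂ, ζ.re ∈ Icc (0:ℝ) 1 → 0 ≤ (ψ ζ).im := by
    intro ζ h
    rw [hψ, bvPsi_im h]
    have h1 := bvU_im_nonneg h
    have h2 : 0 ≤ Complex.normSq (1 - bvU ζ) := Complex.normSq_nonneg _
    have h3 : 0 ≤ b - a := by linarith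
    positivity
  have hmapsIoo : ∀ ζ : ℂ, ζ.re ∈ Ioo (0:ℝ) 1 → 0 < (ψ ζ).im := by
    intro ζ h
    have hIcc : ζ.re ∈ Icc (0:ℝ) 1 := ⟨h.1.le, h.2.le⟩
    rw [hψ, bvPsi_im hIcc]
    exact div_pos (mul_pos (by linarith) (bvU_im_pos h))
      ((Complex.normSq_pos).2 (bvU_ne_one hIcc))
  have hUopen : IsOpen {z : ℂ | 0 < z.im} := isOpen_lt continuous_const Complex.continuous_im
  have hstrip : ∀ ζ : ℂ, ζ ∈ Complex.HadamardThreeLines.verticalStrip 0 1 ↔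
      ζ.re ∈ Ioo (0:ℝ) 1 := fun ζ => Iff.rfl
  have hclstrip : ∀ ζ : ℂ, ζ ∈ Complex.HadamardThreeLines.verticalClosedStrip 0 1 ↔
      ζ.re ∈ Icc (0:ℝ) 1 := fun ζ => Iff.rfl
  have hψcont : ContinuousOn ψ (Complex.HadamardThreeLines.verticalClosedStrip 0 1) :=
    fun ζ h => (bvPsi_differentiableAt ((hclstrip ζ).1 h)).continuousAt.continuousWithinAt
  have hGd : DiffContOnCl ℂ G (Complex.HadamardThreeLines.verticalStrip 0 1) := by
    constructor
    · intro ζ hζ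
      have hF_at : DifferentiableAt ℂ F (ψ ζ) :=
        hdiff.differentiableAt (hUopen.mem_nhds (hmapsIoo ζ ((hstrip ζ).1 hζ)))
      have hd2 : DifferentiableAt ℂ (bvPsi a b) ζ :=
        bvPsi_differentiableAt (Ioo_subset_Icc_self ((hstrip ζ).1 hζ))
      exact (hF_at.comp ζ hd2).differentiableWithinAt
    · have hcl : closure (Complex.HadamardThreeLines.verticalStrip 0 1) ⊆
          Complex.HadamardThreeLines.verticalClosedStrip 0 1 := by
        rw [Complex.HadamardThreeLines.verticalStrip,
          Complex.HadamardThreeLines.verticalClosedStrip, ← closure_Ioo (zero_ne_one),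
          ← Complex.closure_preimage_re]
      refine ContinuousOn.mono ?_ hcl
      exact hcont.comp hψcont (fun ζ h => hmapsIcc ζ ((hclstrip ζ).1 h))
  have hB : BddAbove ((norm ∘ G) '' Complex.HadamardThreeLines.verticalClosedStrip 0 1) := by
    refine ⟨C, ?_⟩
    rintro x ⟨ζ, hζ, rfl⟩
    exact hbd _ (hmapsIcc ζ ((hclstrip ζ).1 hζ))
  have ha0 : ∀ z ∈ Complex.re ⁻¹' {0}, ‖G z‖ ≤ C := by
    intro z hz
    have : z.re ∈ Icc (0:ℝ) 1 := by
      simp only [Set.mem_preimage, Set.mem_singleton_iff] at hz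
      rw [hz]; exact ⟨le_refl _, zero_le_one⟩
    exact hbd _ (hmapsIcc z this)
  have hb0 : ∀ z ∈ Complex.re ⁻¹' {1}, ‖G z‖ ≤ 0 := by
    intro z hz
    simp only [Set.mem_preimage, Set.mem_singleton_iff] at hz
    obtain ⟨r, hr1, hr2, hr3⟩ := bvPsi_re_one hab (ζ := z) hz
    have : G z = 0 := by rw [hG]; simp only; rw [hψ, hr3]; exact hvan r ⟨hr1.le, hr2.le⟩
    rw [this, norm_zero]
  have hGzero : ∀ ζ : ℂ, ζ.re ∈ Ioo (0:ℝ) 1 → G ζ = 0 := by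
    intro ζ hζ
    have hmem : ζ ∈ Complex.HadamardThreeLines.verticalClosedStrip 0 1 :=
      (hclstrip ζ).2 ⟨hζ.1.le, hζ.2.le⟩
    have h3 := Complex.HadamardThreeLines.norm_le_interp_of_mem_verticalClosedStrip' (f := G) zero_lt_one
      hmem hGd hB ha0 hb0
    simp only [sub_zero, div_one] at h3
    rw [Real.zero_rpow (ne_of_gt hζ.1), mul_zero] at h3
    exact norm_le_zero_iff.1 h3
  -- the zeros of F in the open upper half-plane
  have hinj : ∀ x y : ℝ, x ∈ Icc (0:ℝ) 1 → y ∈ Icc (0:ℝ) 1 →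
      ψ (x:ℂ) = ψ (y:ℂ) → x = y := by
    intro x y hx hy hxy
    have hxIcc : ((x:ℂ)).re ∈ Icc (0:ℝ) 1 := by simpa using hx
    have hyIcc : ((y:ℂ)).re ∈ Icc (0:ℝ) 1 := by simpa using hy
    have hdx := bvU_ne_one hxIcc
    have hdy := bvU_ne_one hyIcc
    rw [hψ, bvPsi, bvPsi, div_eq_div_iff hdx hdy] at hxy
    have hu : bvU (x:ℂ) = bvU (y:ℂ) := by
      have hba : ((b:ℂ) - (a:ℂ)) ≠ 0 := by
        rw [← Complex.ofReal_sub, Complex.ofReal_ne_zero]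
        linarith
      have h5 : ((b:ℂ) - (a:ℂ)) * (bvU (x:ℂ) - bvU (y:ℂ)) = 0 := by
        linear_combination hxy
      rcases mul_eq_zero.1 h5 with h6 | h6
      · exact absurd h6 hba
      · exact sub_eq_zero.1 h6
    rw [bvU, bvU, Complex.exp_eq_exp_iff_exists_int] at hu
    obtain ⟨n, hn⟩ := hu
    have him := congrArg Complex.im hn
    simp only [Complex.add_im, Complex.mul_im, Complex.mul_re, Complex.I_re, Complex.I_im,
      Complex.ofReal_re, Complex.ofReal_im, Complex.add_re, Complex.one_re, Complex.one_im,
      Complex.intCast_re, Complex.intCast_im] at him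
    have hxy' : x = y + 4 * (n:ℝ) := by
      have h2 : Real.pi * x = Real.pi * (y + 4*(n:ℝ)) := by
        norm_num at him
        ring_nf at him ⊢
        linarith
      exact mul_left_cancel₀ Real.pi_ne_zero h2
    have hn0 : n = 0 := by
      have habs : |(n:ℝ)| < 1 := by
        rw [abs_lt]
        constructor <;> nlinarith [hx.1, hx.2, hy.1, hy.2]
      have : ((|n| : ℤ) : ℝ) < 1 := by rwa [Int.cast_abs]
      have : |n| < 1 := by exact_mod_cast this
      exact Int.abs_lt_one_iff.mp this
    rw [hn0] at hxy'
    simpa using hxy'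
  -- zeros accumulating at an interior point
  have hseqx : ∀ n : ℕ, (1/2 + 1/((n:ℝ)+4)) ∈ Icc (0:ℝ) 1 := by
    intro n
    have h1 : (0:ℝ) < (n:ℝ) + 4 := by positivity
    have h2 : 1/((n:ℝ)+4) ≤ 1/4 := by
      apply div_le_div_of_nonneg_left (by norm_num) (by norm_num)
      simp
    have h3 : 0 < 1/((n:ℝ)+4) := by positivity
    constructor <;> [linarith; linarith]
  have hseqIoo : ∀ n : ℕ, (1/2 + 1/((n:ℝ)+4)) ∈ Ioo (0:ℝ) 1 := by
    intro n
    have h1 : (0:ℝ) < (n:ℝ) + 4 := by positivity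
    have h2 : 1/((n:ℝ)+4) ≤ 1/4 := by
      apply div_le_div_of_nonneg_left (by norm_num) (by norm_num)
      simp
    have h3 : 0 < 1/((n:ℝ)+4) := by positivity
    constructor <;> [linarith; linarith]
  set z0 : ℂ := ψ (((1/2 : ℝ) : ℂ)) with hz0def
  have hz0mem : z0 ∈ {z : ℂ | 0 < z.im} := by
    apply hmapsIoo
    simp only [Complex.ofReal_re]
    norm_num
  have hFzero : ∀ n : ℕ, F (ψ (((1/2 + 1/((n:ℝ)+4) : ℝ) : ℂ))) = 0 := by
    intro n
    exact hGzero (((1/2 + 1/((n:ℝ)+4) : ℝ) : ℂ))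
      (by simp only [Complex.ofReal_re]; exact hseqIoo n)
  have hne : ∀ n : ℕ, ψ (((1/2 + 1/((n:ℝ)+4) : ℝ) : ℂ)) ≠ z0 := by
    intro n hc
    have h0 : (1/2 : ℝ) ∈ Icc (0:ℝ) 1 := by norm_num
    have := hinj _ _ (hseqx n) h0 hc
    have hp : 0 < 1/((n:ℝ)+4) := by positivity
    linarith
  have htend : Tendsto (fun n : ℕ => ψ (((1/2 + 1/((n:ℝ)+4) : ℝ) : ℂ))) atTop (𝓝 z0) := by
    have h1 : Tendsto (fun n : ℕ => (1/2 + 1/((n:ℝ)+4) : ℝ)) atTop (𝓝 (1/2 : ℝ)) := by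
      have h2 : Tendsto (fun n : ℕ => ((n:ℝ)+4)) atTop atTop :=
        tendsto_atTop_add_const_right _ _ tendsto_natCast_atTop_atTop
      have h3 : Tendsto (fun n : ℕ => 1/((n:ℝ)+4)) atTop (𝓝 0) := by
        simpa [one_div, Pi.inv_def] using h2.inv_tendsto_atTop
      simpa using tendsto_const_nhds.add h3
    have h4 : Tendsto (fun n : ℕ => (((1/2 + 1/((n:ℝ)+4) : ℝ)) : ℂ)) atTop
        (𝓝 (((1/2:ℝ) : ℂ))) := (Complex.continuous_ofReal.tendsto _).comp h1
    have h5 : ContinuousAt ψ (((1/2:ℝ)) : ℂ) := by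
      apply (bvPsi_differentiableAt _).continuousAt
      simp only [Complex.ofReal_re]
      norm_num
    exact h5.tendsto.comp h4
  have htend' : Tendsto (fun n : ℕ => ψ (((1/2 + 1/((n:ℝ)+4) : ℝ) : ℂ))) atTop (nhdsWithin z0 {z0}ᶜ) :=
    tendsto_nhdsWithin_of_tendsto_nhds_of_eventually_within _ htend
      (Eventually.of_forall fun n => hne n)
  have hfreq : ∃ᶠ z in nhdsWithin z0 {z0}ᶜ, F z = 0 :=
    htend'.frequently (Frequently.of_forall fun n => hFzero n)
  have hA : AnalyticOnNhd ℂ F {z : ℂ | 0 < z.im} := hdiff.analyticOnNhd hUopen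
  have hpre : IsPreconnected {z : ℂ | 0 < z.im} := (convex_halfSpace_im_gt 0).isPreconnected
  have hF0 : Set.EqOn F 0 {z : ℂ | 0 < z.im} :=
    hA.eqOn_zero_of_preconnected_of_frequently_eq_zero hpre hz0mem hfreq
  -- boundary values
  intro t
  have hseq : Tendsto (fun n : ℕ => (t:ℂ) + (((n:ℝ)+1)⁻¹ : ℝ) * Complex.I) atTop (𝓝 (t:ℂ)) := by
    have h2 : Tendsto (fun n : ℕ => ((n:ℝ)+1)) atTop atTop :=
      tendsto_atTop_add_const_right _ _ tendsto_natCast_atTop_atTop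
    have h3 : Tendsto (fun n : ℕ => (((n:ℝ)+1)⁻¹ : ℝ)) atTop (𝓝 0) := h2.inv_tendsto_atTop
    have h4 : Tendsto (fun n : ℕ => ((((n:ℝ)+1)⁻¹ : ℝ) : ℂ)) atTop (𝓝 ((0:ℝ):ℂ)) :=
      (Complex.continuous_ofReal.tendsto _).comp h3
    have h5 := tendsto_const_nhds (x := (t:ℂ)) (f := atTop (α := ℕ)) |>.add (h4.mul_const Complex.I)
    simpa using h5
  have hvals : ∀ n : ℕ, F ((t:ℂ) + (((n:ℝ)+1)⁻¹ : ℝ) * Complex.I) = 0 := by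
    intro n
    apply hF0
    simp only [Set.mem_setOf_eq, Complex.add_im, Complex.ofReal_im, Complex.mul_im,
      Complex.ofReal_re, Complex.I_im, Complex.I_re]
    simp
    positivity
  have hcw : ContinuousWithinAt F {z : ℂ | 0 ≤ z.im} (t:ℂ) := hcont _ (by simp)
  have hseq' : Tendsto (fun n : ℕ => (t:ℂ) + (((n:ℝ)+1)⁻¹ : ℝ) * Complex.I) atTop
      (nhdsWithin (t:ℂ) {z : ℂ | 0 ≤ z.im}) := by
    apply tendsto_nhdsWithin_of_tendsto_nhds_of_eventually_within _ hseq
    apply Eventually.of_forall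
    intro n
    simp only [Set.mem_setOf_eq, Complex.add_im, Complex.ofReal_im, Complex.mul_im,
      Complex.ofReal_re, Complex.I_im, Complex.I_re]
    simp
    positivity
  have hlim : Tendsto (fun n : ℕ => F ((t:ℂ) + (((n:ℝ)+1)⁻¹ : ℝ) * Complex.I)) atTop
      (𝓝 (F (t:ℂ))) := hcw.tendsto.comp hseq'
  have hlim0 : Tendsto (fun n : ℕ => F ((t:ℂ) + (((n:ℝ)+1)⁻¹ : ℝ) * Complex.I)) atTop
      (𝓝 (0:ℂ)) := by
    simp only [hvals]
    exact tendsto_const_nhds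
  exact tendsto_nhds_unique hlim hlim0


lemma pos_op_kernel {H : Type*} [NormedAddCommGroup H] [InnerProductSpace ℂ H] [CompleteSpace H]
    {T : H →L[ℂ] H} (hT : T.IsPositive) {x : H} (h : (⟪x, T x⟫_ℂ).re = 0) : T x = 0 := by
  set y := T x with hy
  have hsym : ∀ u v : H, ⟪T u, v⟫_ℂ = ⟪u, T v⟫_ℂ := fun u v => hT.isSelfAdjoint.isSymmetric u v
  have hK : 0 ≤ (⟪y, T y⟫_ℂ).re := by
    have := hT.inner_nonneg_right (𝕜 := ℂ) y
    exact (Complex.nonneg_iff.mp this).1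
  have hyx : ⟪y, T x⟫_ℂ = ((‖y‖^2 : ℝ) : ℂ) := by
    rw [← hy, inner_self_eq_norm_sq_to_K]
    norm_cast
  have hxy : ⟪x, T y⟫_ℂ = ((‖y‖^2 : ℝ) : ℂ) := by
    rw [← hsym x y, ← hy, inner_self_eq_norm_sq_to_K]
    norm_cast
  have key : ∀ t : ℝ, 0 ≤ 2*t*(‖y‖^2) + t^2 * (⟪y, T y⟫_ℂ).re := by
    intro t
    have h1 := hT.inner_nonneg_right (𝕜 := ℂ) (x + (t:ℂ) • y)
    replace h1 := (Complex.nonneg_iff.mp h1).1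
    have hexp : ⟪x + (t:ℂ) • y, T (x + (t:ℂ) • y)⟫_ℂ
        = ⟪x, T x⟫_ℂ + (t:ℂ) * ⟪y, T x⟫_ℂ + (t:ℂ) * ⟪x, T y⟫_ℂ + (t:ℂ)^2 * ⟪y, T y⟫_ℂ := by
      rw [map_add, ContinuousLinearMap.map_smul]
      simp only [inner_add_left, inner_add_right, inner_smul_left, inner_smul_right,
        Complex.conj_ofReal]
      ring
    rw [hexp] at h1
    simp only [Complex.add_re, Complex.mul_re, hyx, hxy, h] at h1
    simp only [Complex.ofReal_re, Complex.ofReal_im, Complex.sq_norm] at h1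
    have hre2 : ((t:ℂ)^2).re = t^2 := by
      rw [sq, Complex.mul_re]; simp; ring
    have him2 : ((t:ℂ)^2).im = 0 := by
      rw [sq, Complex.mul_im]; simp
    rw [hre2, him2] at h1
    linarith
  by_contra hy0
  have hs : 0 < ‖y‖^2 := by
    have hyne : y ≠ 0 := fun hc => hy0 (hy ▸ hc)
    have := norm_pos_iff.mpr hyne
    positivity
  set s := ‖y‖^2 with hsdef
  set K := (⟪y, T y⟫_ℂ).re with hKdef
  have hK1 : (0:ℝ) < K + 1 := by linarith
  have h1 := key (-(s/(K+1)))
  have h2 : 2 * (-(s/(K+1))) * s + (-(s/(K+1)))^2 * K = (-(s^2) * (K+2)) / (K+1)^2 := by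
    field_simp
    ring
  rw [h2] at h1
  have h3 : 0 ≤ -(s^2) * (K+2) := by
    have := (div_nonneg_iff (α := ℝ)).mp h1
    rcases this with ⟨h4, _⟩ | ⟨_, h5⟩
    · exact h4
    · nlinarith
  nlinarith

/-- **Strict positivity of covariant time POV-measures.**
If `τ` is a normalized POV-measure on the Borel sets of `ℝ` with values in the bounded
operators of a complex Hilbert space `H`, and `U` is a one-parameter unitary group
satisfying the positive-energy condition, such that `(τ, U)` is a covariance system
(`U(λ) τ(X) U(λ)* = τ(X + λ)`), then `⟨φ, τ((a,b]) φ⟩ > 0` for every nonzero `φ` and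
every interval `(a, b]` with `a < b`. -/
theorem covariant_pov_strictly_positive
    {H : Type*} [NormedAddCommGroup H] [InnerProductSpace ℂ H] [CompleteSpace H]
    (τ : Set ℝ → (H →L[ℂ] H)) (U : ℝ → (H →L[ℂ] H))
    -- τ is a normalized POV-measure on the Borel sets of ℝ
    (hτ_pos : ∀ X : Set ℝ, MeasurableSet X → (τ X).IsPositive)
    (hτ_empty : τ ∅ = 0)
    (hτ_univ : τ Set.univ = 1)
    (hτ_add : ∀ X : ℕ → Set ℝ, (∀ i, MeasurableSet (X i)) →
      Pairwise (Function.onFun Disjoint X) → ∀ φ : H,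
      HasSum (fun i => ⟪φ, τ (X i) φ⟫_ℂ) ⟪φ, τ (⋃ i, X i) φ⟫_ℂ)
    -- U is a one-parameter unitary group
    (hU_unitary : ∀ l : ℝ,
      U l ∘L ContinuousLinearMap.adjoint (U l) = 1 ∧
      ContinuousLinearMap.adjoint (U l) ∘L U l = 1)
    (hU_zero : U 0 = 1)
    (hU_add : ∀ l m : ℝ, U (l + m) = U l ∘L U m)
    -- positive-energy condition: matrix elements of U extend to bounded continuous
    -- functions on the closed upper half-plane, holomorphic in the open half-plane
    (hU_posenergy : ∀ χ ψ : H, ∃ F : ℂ → ℂ,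
      (∃ C : ℝ, ∀ z : ℂ, 0 ≤ z.im → ‖F z‖ ≤ C) ∧
      ContinuousOn F {z : ℂ | 0 ≤ z.im} ∧
      DifferentiableOn ℂ F {z : ℂ | 0 < z.im} ∧
      ∀ l : ℝ, F (l : ℂ) = ⟪χ, U l ψ⟫_ℂ)
    -- covariance: U(λ) τ(X) U(λ)* = τ(X + λ)
    (hcov : ∀ X : Set ℝ, MeasurableSet X → ∀ l : ℝ,
      U l ∘L τ X ∘L ContinuousLinearMap.adjoint (U l) = τ ((· + l) '' X)) :
    ∀ φ : H, φ ≠ 0 → ∀ a b : ℝ, a < b → 0 < (⟪φ, τ (Set.Ioc a b) φ⟫_ℂ).re := by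
  intro φ hφ a b hab
  by_contra hcon
  have hIoc : MeasurableSet (Set.Ioc a b) := measurableSet_Ioc
  have hnonneg : ∀ X : Set ℝ, MeasurableSet X → 0 ≤ (⟪φ, τ X φ⟫_ℂ).re := by
    intro X hX
    have := (hτ_pos X hX).inner_nonneg_right (𝕜 := ℂ) φ
    exact (Complex.nonneg_iff.mp this).1
  have hzero : (⟪φ, τ (Set.Ioc a b) φ⟫_ℂ).re = 0 :=
    le_antisymm (not_lt.mp hcon) (hnonneg _ hIoc)
  have hUadj : ∀ l : ℝ, ContinuousLinearMap.adjoint (U l) = U (-l) := by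
    intro l
    have h1 := (hU_unitary l).2
    have h2 : U l ∘L U (-l) = 1 := by rw [← hU_add]; simp [hU_zero]
    ext x
    have h2x : U l (U (-l) x) = x := by
      have := congrArg (fun A => A x) h2; simpa using this
    have h1x : ContinuousLinearMap.adjoint (U l) (U l (U (-l) x)) = U (-l) x := by
      have := congrArg (fun A => A (U (-l) x)) h1; simpa using this
    calc ContinuousLinearMap.adjoint (U l) x
        = ContinuousLinearMap.adjoint (U l) (U l (U (-l) x)) := by rw [h2x]
      _ = U (-l) x := h1x
  have hτsym : ∀ X, MeasurableSet X → ∀ u v : H, ⟪τ X u, v⟫_ℂ = ⟪u, τ X v⟫_ℂ :=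
    fun X hX u v => (hτ_pos X hX).isSelfAdjoint.isSymmetric u v
  set ε : ℝ := (b - a)/2 with hεdef
  have hεpos : 0 < ε := by rw [hεdef]; linarith
  set c : ℝ := a + ε with hcdef
  have hac : a < c := by rw [hcdef]; linarith
  have hcb : c ≤ b := by rw [hcdef, hεdef]; linarith
  have hXc : MeasurableSet (Set.Ioc a c) := measurableSet_Ioc
  -- finite additivity for two disjoint sets
  have hadd2 : ∀ (X Y : Set ℝ), MeasurableSet X → MeasurableSet Y → Disjoint X Y →
      ⟪φ, τ (X ∪ Y) φ⟫_ℂ = ⟪φ, τ X φ⟫_ℂ + ⟪φ, τ Y φ⟫_ℂ := by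
    intro X Y hX hY hd
    set f : ℕ → Set ℝ := fun i => if i = 0 then X else if i = 1 then Y else ∅ with hfdef
    have hmeas : ∀ i, MeasurableSet (f i) := by
      intro i
      match i with
      | 0 => simpa [hfdef] using hX
      | 1 => simpa [hfdef] using hY
      | (n+2) => simp [hfdef]
    have hpw : Pairwise (Function.onFun Disjoint f) := by
      intro i j hij
      unfold Function.onFun
      match i, j with
      | 0, 0 => exact absurd rfl hij
      | 0, 1 => simpa [hfdef] using hd
      | 1, 0 => simpa [hfdef] using hd.symm
      | 0, (k+2) => simp [hfdef]
      | 1, 1 => exact absurd rfl hij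
      | 1, (k+2) => simp [hfdef]
      | (k+2), m => simp [hfdef]
    have hun : (⋃ i, f i) = X ∪ Y := by
      apply Set.Subset.antisymm
      · refine Set.iUnion_subset fun i => ?_
        match i with
        | 0 => simp [hfdef]
        | 1 => simp [hfdef]
        | (n+2) => simp [hfdef]
      · refine Set.union_subset ?_ ?_
        · have h0 : X = f 0 := by simp [hfdef]
          conv_lhs => rw [h0]
          exact Set.subset_iUnion f 0
        · have h1 : Y = f 1 := by simp [hfdef]
          conv_lhs => rw [h1]
          exact Set.subset_iUnion f 1
    have hsum := hτ_add f hmeas hpw φ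
    rw [hun] at hsum
    have hzero2 : ∀ i ∉ ({0, 1} : Finset ℕ), ⟪φ, τ (f i) φ⟫_ℂ = 0 := by
      intro i hi
      have hfi : f i = ∅ := by
        match i with
        | 0 => simp at hi
        | 1 => simp at hi
        | (n+2) => simp [hfdef]
      rw [hfi, hτ_empty]
      simp
    have hfin := hasSum_sum_of_ne_finset_zero (L := SummationFilter.unconditional ℕ) hzero2
    have huni := hsum.unique hfin
    rw [huni, Finset.sum_pair (by norm_num : (0:ℕ) ≠ 1)]
    simp [hfdef]
  have hmono0 : ∀ (X : Set ℝ), MeasurableSet X → X ⊆ Set.Ioc a b →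
      (⟪φ, τ X φ⟫_ℂ).re = 0 := by
    intro X hX hsub
    have hdiffm : MeasurableSet (Set.Ioc a b \ X) := hIoc.diff hX
    have hd : Disjoint X (Set.Ioc a b \ X) := Set.disjoint_sdiff_right
    have hu : X ∪ (Set.Ioc a b \ X) = Set.Ioc a b := Set.union_diff_cancel hsub
    have heq := hadd2 X _ hX hdiffm hd
    rw [hu] at heq
    have hre := congrArg Complex.re heq
    rw [hzero, Complex.add_re] at hre
    have h1 := hnonneg X hX
    have h2 := hnonneg _ hdiffm
    linarith
  -- Step 1 : τ((a,c]) kills U(-l)φ for l ∈ [0, ε]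
  have hstep1 : ∀ l : ℝ, l ∈ Set.Icc (0:ℝ) ε → τ (Set.Ioc a c) (U (-l) φ) = 0 := by
    intro l hl
    have himg : (· + l) '' Set.Ioc a c = Set.Ioc (a + l) (c + l) := Set.image_add_const_Ioc l a c
    have hsub : Set.Ioc (a+l) (c+l) ⊆ Set.Ioc a b := by
      apply Set.Ioc_subset_Ioc
      · linarith [hl.1]
      · rw [hcdef]; linarith [hl.2]
    have hz := hmono0 _ measurableSet_Ioc hsub
    have hcv := hcov (Set.Ioc a c) hXc l
    rw [himg] at hcv
    have hinner : ⟪φ, τ (Set.Ioc (a+l) (c+l)) φ⟫_ℂ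
        = ⟪U (-l) φ, τ (Set.Ioc a c) (U (-l) φ)⟫_ℂ := by
      rw [← hcv]
      simp only [ContinuousLinearMap.comp_apply]
      rw [← ContinuousLinearMap.adjoint_inner_left (U l), hUadj l]
    rw [hinner] at hz
    exact pos_op_kernel (hτ_pos _ hXc) hz
  -- Step 2 : τ((a,c]) kills U(t)φ for every t
  have hstep2 : ∀ t : ℝ, τ (Set.Ioc a c) (U t φ) = 0 := by
    intro t
    have hkey : ∀ χ : H, ⟪χ, τ (Set.Ioc a c) (U t φ)⟫_ℂ = 0 := by
      intro χ
      obtain ⟨F, ⟨C, hbd⟩, hcont, hdiff, hFval⟩ := hU_posenergy (τ (Set.Ioc a c) χ) φ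
      have hvan : ∀ x : ℝ, x ∈ Set.Icc (-ε) (0:ℝ) → F (x:ℂ) = 0 := by
        intro x hx
        rw [hFval x, hτsym _ hXc]
        have hxl : U x φ = U (-(-x)) φ := by norm_num
        rw [hxl, hstep1 (-x) ⟨by linarith [hx.2], by linarith [hx.1]⟩]
        simp
      have hFt := bv_main (show (-ε) < 0 by linarith) hbd hcont hdiff hvan t
      rw [hFval t, hτsym _ hXc] at hFt
      exact hFt
    have := hkey (τ (Set.Ioc a c) (U t φ))
    rwa [inner_self_eq_zero] at this
  -- Step 3 : all translates of (a,c] have zero measure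
  have hstep3 : ∀ s : ℝ, ⟪φ, τ (Set.Ioc s (s + ε)) φ⟫_ℂ = 0 := by
    intro s
    have hcv := hcov (Set.Ioc a c) hXc (s - a)
    have himg : (· + (s-a)) '' Set.Ioc a c = Set.Ioc s (s + ε) := by
      have h1 : a + (s - a) = s := by ring
      have h2 : c + (s - a) = s + ε := by rw [hcdef]; ring
      rw [Set.image_add_const_Ioc (s-a) a c, h1, h2]
    rw [himg] at hcv
    rw [← hcv]
    simp only [ContinuousLinearMap.comp_apply]
    rw [← ContinuousLinearMap.adjoint_inner_left (U (s-a)), hUadj (s-a)]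
    rw [show U (-(s-a)) φ = U (a - s) φ by norm_num]
    rw [show τ (Set.Ioc a c) (U (a-s) φ) = 0 from hstep2 (a-s)]
    simp
  -- Covering ℝ by countably many translates
  set n : ℕ → ℤ := fun i => Equiv.intEquivNat.symm i with hndef
  set Xs : ℕ → Set ℝ := fun i => Set.Ioc (a + (n i) * ε) (a + (n i) * ε + ε) with hXsdef
  have hmeasX : ∀ i, MeasurableSet (Xs i) := fun i => measurableSet_Ioc
  have hgen : ∀ k m : ℤ, k < m →
      Disjoint (Set.Ioc (a + (k:ℝ)*ε) (a + (k:ℝ)*ε + ε)) (Set.Ioc (a + (m:ℝ)*ε) (a + (m:ℝ)*ε + ε)) := by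
    intro k m hkm
    rw [Set.disjoint_left]
    intro x hx1 hx2
    have hcast : (k:ℝ) + 1 ≤ (m:ℝ) := by exact_mod_cast hkm
    have := hx1.2
    have := hx2.1
    nlinarith [hεpos]
  have hpwX : Pairwise (Function.onFun Disjoint Xs) := by
    intro i j hij
    unfold Function.onFun
    have hne : n i ≠ n j := by
      intro hc
      exact hij (Equiv.intEquivNat.symm.injective hc)
    rcases lt_or_gt_of_ne hne with h | h
    · exact hgen _ _ h
    · exact (hgen _ _ h).symm
  have hcoverU : (⋃ i, Xs i) = Set.univ := by
    ext x
    simp only [Set.mem_iUnion, Set.mem_univ, iff_true]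
    set q : ℤ := ⌈(x - a)/ε⌉ - 1 with hqdef
    refine ⟨Equiv.intEquivNat q, ?_⟩
    have hnq : n (Equiv.intEquivNat q) = q := by
      rw [hndef]
      simp
    have hq1 : ((q:ℝ)) < (x - a)/ε := by
      rw [hqdef]
      push_cast
      linarith [Int.ceil_lt_add_one ((x - a)/ε)]
    have hq2 : (x - a)/ε ≤ (q:ℝ) + 1 := by
      rw [hqdef]
      push_cast
      linarith [Int.le_ceil ((x - a)/ε)]
    have hm1 : a + (q:ℝ)*ε < x := by
      have := (lt_div_iff₀ hεpos).mp hq1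
      linarith
    have hm2 : x ≤ a + (q:ℝ)*ε + ε := by
      have := (div_le_iff₀ hεpos).mp hq2
      linarith
    rw [hXsdef]
    simp only [hnq]
    exact ⟨hm1, hm2⟩
  have hsum := hτ_add Xs hmeasX hpwX φ
  rw [hcoverU, hτ_univ] at hsum
  have hzsum : HasSum (fun i => ⟪φ, τ (Xs i) φ⟫_ℂ) 0 := by
    have hz : (fun i => ⟪φ, τ (Xs i) φ⟫_ℂ) = fun _ => (0:ℂ) := by
      funext i
      have := hstep3 (a + (n i) * ε)
      simpa [hXsdef] using this
    rw [hz]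
    exact hasSum_zero
  have h0 := hsum.unique hzsum
  rw [ContinuousLinearMap.one_apply] at h0
  exact hφ (inner_self_eq_zero.mp h0)
end

section
/- Let 𝓗 be a nontrivial complex Hilbert space (containing some nonzero vector), τ a normalized POV-measure on the Borel sets of ℝ with values in the bounded operators on 𝓗, and U : ℝ → B(𝓗) a one-parameter unitary group satisfying the positive-energy condition, such that U(λ) τ(X) U(λ)* = τ(X + λ) for every Borel set X and every λ ∈ ℝ. Then τ is not projection-valued: there exists a Borel set X with τ(X) ∘ τ(X) ≠ τ(X). -/
open MeasureTheory Complex Filter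
open scoped InnerProductSpace ComplexConjugate

section PauliAux

open Asymptotics Topology Set

private lemma pauli_hasDerivAt_conj_conj {f : ℂ → ℂ} {c w : ℂ} (h : HasDerivAt f c w) :
    HasDerivAt (fun z => conj (f (conj z))) (conj c) (conj w) := by
  rw [hasDerivAt_iff_isLittleO] at h ⊢
  have hconj : Tendsto (fun z : ℂ => conj z) (𝓝 (conj w)) (𝓝 w) := by
    simpa using continuous_conj.tendsto (conj w)
  have H := h.comp_tendsto hconj
  rw [← isLittleO_norm_norm] at H ⊢
  convert H using 2 with z
  · simp only [Function.comp_apply, Complex.conj_conj]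
    rw [← RCLike.norm_conj (K := ℂ) (f (conj z) - f w - (conj z - w) • c)]
    congr 1
    simp [smul_eq_mul, map_mul, map_sub, mul_comm]
  · rename_i z
    simp only [Function.comp_apply]
    rw [← RCLike.norm_conj (K := ℂ) (conj z - w)]
    congr 1
    simp [map_sub]

private lemma pauli_strip_vanish {g : ℂ → ℂ} {C : ℝ}
    (hgbd : ∀ z : ℂ, 0 ≤ z.im → ‖g z‖ ≤ C)
    (hgcont : ContinuousOn g {z : ℂ | 0 ≤ z.im})
    (hgdiff : DifferentiableOn ℂ g {z : ℂ | 0 < z.im})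
    (hg0 : ∀ x : ℝ, g ((x : ℝ) : ℂ) = 0)
    (x : ℝ) : g ((x : ℂ) + I / 2) = 0 := by
  have hopen : IsOpen {z : ℂ | 0 < z.im} := isOpen_lt continuous_const continuous_im
  have hC0 : 0 ≤ C := le_trans (norm_nonneg (g I)) (hgbd I (by simp))
  set Q : ℂ → ℂ := fun z => g z * conj (g (conj z + I)) with hQ_def
  have him : ∀ z : ℂ, ((starRingEnd ℂ) z + I).im = 1 - z.im := by
    intro z; simp; ring
  have hQd : DiffContOnCl ℂ Q (im ⁻¹' Ioo (0 : ℝ) 1) := by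
    constructor
    · intro z hz
      simp only [mem_preimage, mem_Ioo] at hz
      have h1 : DifferentiableAt ℂ g z := (hgdiff z hz.1).differentiableAt (hopen.mem_nhds hz.1)
      have h2 : DifferentiableAt ℂ (fun u : ℂ => g (u + I)) (conj z) := by
        refine DifferentiableAt.comp _ ?_ (differentiableAt_id.add_const I)
        refine (hgdiff _ ?_).differentiableAt (hopen.mem_nhds ?_) <;>
          · show 0 < ((starRingEnd ℂ) z + I).im
            rw [him]; linarith [hz.2]
      have h3 := (pauli_hasDerivAt_conj_conj h2.hasDerivAt).differentiableAt
      rw [Complex.conj_conj] at h3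
      exact (h1.mul h3).differentiableWithinAt
    · refine ContinuousOn.mono (s := im ⁻¹' Icc (0:ℝ) 1) ?_ ?_
      · refine ContinuousOn.mul (hgcont.mono ?_) ?_
        · intro z hz; exact (mem_preimage.1 hz).1
        · refine Complex.continuous_conj.comp_continuousOn ?_
          refine hgcont.comp ((Complex.continuous_conj.add continuous_const).continuousOn) ?_
          intro z hz
          show (0:ℝ) ≤ ((starRingEnd ℂ) z + I).im
          rw [him]; exact sub_nonneg.2 (mem_preimage.1 hz).2
      · rw [Complex.closure_preimage_im, closure_Ioo (by norm_num : (0:ℝ) ≠ 1)]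
  have hQB : ∃ c < Real.pi / (1 - 0), ∃ B,
      Q =O[comap (_root_.abs ∘ re) atTop ⊓ 𝓟 (im ⁻¹' Ioo (0:ℝ) 1)]
        fun z => Real.exp (B * Real.exp (c * |z.re|)) := by
    refine ⟨0, by simpa using Real.pi_pos, 0, ?_⟩
    refine IsBigO.of_bound (C * C) ?_
    rw [eventually_inf_principal]
    refine Eventually.of_forall fun z hz => ?_
    simp only [mem_preimage, mem_Ioo] at hz
    have hb : ‖Q z‖ ≤ C * C := by
      rw [hQ_def]
      calc ‖g z * conj (g (conj z + I))‖
          = ‖g z‖ * ‖g ((starRingEnd ℂ) z + I)‖ := by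
            rw [norm_mul, RCLike.norm_conj]
        _ ≤ C * C := by
            refine mul_le_mul (hgbd z hz.1.le) (hgbd _ ?_) (norm_nonneg _) hC0
            rw [him]; linarith [hz.2]
    simpa [Real.exp_zero] using hb
  have hbnd_a : ∀ z : ℂ, z.im = 0 → Q z = 0 := by
    intro z hz
    have hzr : z = ((z.re : ℝ) : ℂ) := by
      apply Complex.ext <;> simp [hz]
    rw [hQ_def]; simp only
    rw [hzr, hg0 z.re, zero_mul]
  have hbnd_b : ∀ z : ℂ, z.im = 1 → Q z = 0 := by
    intro z hz
    have h0 : ((starRingEnd ℂ) z + I).im = 0 := by rw [him, hz]; ring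
    have hzr : (starRingEnd ℂ) z + I = ((((starRingEnd ℂ) z + I).re : ℝ) : ℂ) := by
      apply Complex.ext <;> simp [h0]
    rw [hQ_def]; simp only
    rw [hzr, hg0, map_zero, mul_zero]
  have hQ0 : EqOn Q 0 (im ⁻¹' Icc (0:ℝ) 1) :=
    PhragmenLindelof.eq_zero_on_horizontal_strip hQd hQB hbnd_a hbnd_b
  have hzmem : ((x : ℂ) + I / 2) ∈ im ⁻¹' Icc (0:ℝ) 1 := by
    simp [mem_preimage]; norm_num
  have hfix : (starRingEnd ℂ) ((x : ℂ) + I / 2) + I = (x : ℂ) + I / 2 := by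
    have : (starRingEnd ℂ) ((x : ℂ) + I / 2) = (x : ℂ) - I / 2 := by
      rw [map_add, map_div₀, Complex.conj_I, Complex.conj_ofReal, map_ofNat]
      ring
    rw [this]; ring
  have := hQ0 hzmem
  rw [hQ_def] at this; simp only [Pi.zero_apply] at this
  rw [hfix] at this
  rcases mul_eq_zero.1 this with h | h
  · exact h
  · exact (RingHom.injective (starRingEnd ℂ)).eq_iff.1 (by simpa using h)

private lemma pauli_core_vanish {F : ℂ → ℂ} {C : ℝ}
    (hbd : ∀ z : ℂ, 0 ≤ z.im → ‖F z‖ ≤ C)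
    (hcont : ContinuousOn F {z : ℂ | 0 ≤ z.im})
    (hdiff : DifferentiableOn ℂ F {z : ℂ | 0 < z.im})
    (hzero : ∀ x : ℝ, 1 ≤ |x| → F (x : ℂ) = 0) :
    F 0 = 0 := by
  have hopen : IsOpen {z : ℂ | 0 < z.im} := isOpen_lt continuous_const continuous_im
  have hC0 : 0 ≤ C := le_trans (norm_nonneg (F I)) (hbd I (by simp))
  set g : ℂ → ℂ := fun z => F z * F (z + 2) with hg_def
  have hmem2 : ∀ z : ℂ, 0 < z.im → 0 < (z + 2).im := by intro z hz; simpa using hz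
  have hmem2' : ∀ z : ℂ, 0 ≤ z.im → 0 ≤ (z + 2).im := by intro z hz; simpa using hz
  have hg0 : ∀ x : ℝ, g ((x : ℝ) : ℂ) = 0 := by
    intro x
    by_cases hx : x ≤ -1
    · have : F (x : ℂ) = 0 := hzero x (by rw [le_abs]; right; linarith)
      simp [hg_def, this]
    · have h2 : ((x : ℂ) + 2) = (((x + 2 : ℝ)) : ℂ) := by push_cast; ring
      have : F ((x : ℂ) + 2) = 0 := by
        rw [h2]; exact hzero (x + 2) (by rw [le_abs]; left; linarith)
      simp [hg_def, this]
  have hgdiff : DifferentiableOn ℂ g {z : ℂ | 0 < z.im} :=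
    hdiff.mul (hdiff.comp ((differentiable_id.add_const 2).differentiableOn)
      (fun z hz => hmem2 z hz))
  have hgcont : ContinuousOn g {z : ℂ | 0 ≤ z.im} :=
    hcont.mul (hcont.comp ((continuous_id.add continuous_const).continuousOn)
      (fun z hz => hmem2' z hz))
  have hgbd : ∀ z : ℂ, 0 ≤ z.im → ‖g z‖ ≤ C * C := by
    intro z hz
    rw [hg_def]
    calc ‖F z * F (z + 2)‖ = ‖F z‖ * ‖F (z + 2)‖ := norm_mul _ _
    _ ≤ C * C := mul_le_mul (hbd z hz) (hbd _ (hmem2' z hz)) (norm_nonneg _) hC0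
  have key : ∀ x : ℝ, g ((x : ℂ) + I / 2) = 0 :=
    pauli_strip_vanish hgbd hgcont hgdiff hg0
  set A : Set ℝ := {x : ℝ | F ((x : ℂ) + I / 2) = 0} with hA_def
  have hAor : ∀ x : ℝ, x ∈ A ∨ (x + 2) ∈ A := by
    intro x
    have := key x
    rw [hg_def] at this
    rcases mul_eq_zero.1 this with h | h
    · exact Or.inl h
    · right
      show F (((x + 2 : ℝ) : ℂ) + I / 2) = 0
      convert h using 2
      push_cast; ring
  have hinf : (A ∩ Icc 0 3).Infinite := by
    intro hfin
    have hsub : Icc (0:ℝ) 1 ⊆ (A ∩ Icc 0 3) ∪ (fun t => t - 2) '' (A ∩ Icc 0 3) := by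
      intro t ht
      rcases hAor t with h | h
      · exact Or.inl ⟨h, ht.1, le_trans ht.2 (by norm_num)⟩
      · exact Or.inr ⟨t + 2, ⟨h, by constructor <;> [linarith [ht.1]; linarith [ht.2]]⟩, by ring⟩
    exact (Set.Icc_infinite (by norm_num : (0:ℝ) < 1)) ((hfin.union (hfin.image _)).subset hsub)
  obtain ⟨x₀, -, hx₀⟩ := hinf.exists_accPt_of_subset_isCompact isCompact_Icc inter_subset_right
  set z₀ : ℂ := (x₀ : ℂ) + I / 2 with hz₀_def
  have hz₀mem : z₀ ∈ {z : ℂ | 0 < z.im} := by simp [hz₀_def]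
  have hfreqR : ∃ᶠ t in 𝓝[≠] x₀, t ∈ A ∩ Icc 0 3 := by
    rw [frequently_nhdsWithin_iff]
    exact ((accPt_iff_frequently (x := x₀)).1 hx₀).mono fun t ht => ⟨ht.2, ht.1⟩
  have htend : Tendsto (fun t : ℝ => (t : ℂ) + I / 2) (𝓝[≠] x₀) (𝓝[≠] z₀) := by
    refine tendsto_nhdsWithin_of_tendsto_nhds_of_eventually_within _ ?_ ?_
    · exact ((continuous_ofReal.add continuous_const).tendsto x₀).mono_left nhdsWithin_le_nhds
    · refine eventually_nhdsWithin_of_forall fun t ht => ?_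
      simp only [mem_compl_iff, mem_singleton_iff] at ht ⊢
      intro hc
      apply ht
      have := congrArg Complex.re hc
      simpa [hz₀_def] using this
  have hfreqC : ∃ᶠ z in 𝓝[≠] z₀, F z = 0 := htend.frequently (hfreqR.mono fun t ht => ht.1)
  have hFanalytic : AnalyticOnNhd ℂ F {z : ℂ | 0 < z.im} := hdiff.analyticOnNhd hopen
  have hF0 : EqOn F 0 {z : ℂ | 0 < z.im} :=
    hFanalytic.eqOn_zero_of_preconnected_of_frequently_eq_zero
      (convex_halfSpace_im_gt 0).isPreconnected hz₀mem hfreqC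
  have hne : (𝓝[{z : ℂ | 0 < z.im}] (0:ℂ)).NeBot := by
    rw [← mem_closure_iff_nhdsWithin_neBot,
      show {z : ℂ | 0 < z.im} = im ⁻¹' Ioi 0 from rfl, Complex.closure_preimage_im]
    simp [closure_Ioi]
  have h1 : Tendsto F (𝓝[{z : ℂ | 0 < z.im}] 0) (𝓝 (F 0)) :=
    ((hcont 0 (by simp)).mono_left (nhdsWithin_mono 0 fun z (hz : 0 < z.im) => hz.le))
  have h2 : Tendsto F (𝓝[{z : ℂ | 0 < z.im}] 0) (𝓝 0) := by
    refine Tendsto.congr' ?_ tendsto_const_nhds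
    exact eventually_nhdsWithin_of_forall fun z hz => (hF0 hz).symm
  exact tendsto_nhds_unique h1 h2

variable {H : Type*} [NormedAddCommGroup H] [InnerProductSpace ℂ H]

omit [InnerProductSpace ℂ H] in
private lemma pauli_clm_eq_of_inner [InnerProductSpace ℂ H] {S T : H →L[ℂ] H}
    (h : ∀ φ : H, ⟪φ, S φ⟫_ℂ = ⟪φ, T φ⟫_ℂ) : S = T := by
  have h0 : ∀ x : H, ⟪((S - T : H →L[ℂ] H) : H →ₗ[ℂ] H) x, x⟫_ℂ = 0 := by
    intro x
    have h2 : ⟪x, (S - T) x⟫_ℂ = 0 := by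
      rw [ContinuousLinearMap.sub_apply, inner_sub_right]
      exact sub_eq_zero.2 (h x)
    calc ⟪(S - T) x, x⟫_ℂ = conj ⟪x, (S - T) x⟫_ℂ := (inner_conj_symm _ _).symm
    _ = 0 := by rw [h2, map_zero]
  have hlin := (inner_map_self_eq_zero _).1 h0
  have h3 : S - T = 0 := by
    ext x
    exact congrFun (congrArg (fun (f : H →ₗ[ℂ] H) => ⇑f) hlin) x
  exact sub_eq_zero.1 h3

private lemma pauli_proj_orth {P Q : H →L[ℂ] H}
    (hP : P * P = P) (hQ : Q * Q = Q) (hR : (P + Q) * (P + Q) = P + Q) :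
    P * Q = 0 := by
  have h1 : P * Q + Q * P = 0 := by
    have e1 : P * P + P * Q + (Q * P + Q * Q) = P + Q := by rw [← hR]; noncomm_ring
    rw [hP, hQ] at e1
    have e2 : P * Q + Q * P = P + P * Q + (Q * P + Q) - (P + Q) := by abel
    rw [e2, e1, sub_self]
  have hl : P * Q + P * Q * P = 0 := by
    have := congrArg (fun T => P * T) h1
    simpa [mul_add, ← mul_assoc, hP] using this
  have hr : P * Q * P + Q * P = 0 := by
    have := congrArg (fun T => T * P) h1
    simpa [add_mul, mul_assoc, hP] using this
  have heq : P * Q = Q * P := by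
    have := congrArg (fun x => x - P * Q * P) (hl.trans hr.symm)
    simpa using this
  have h2 : (2 : ℂ) • (P * Q) = 0 := by
    rw [two_smul]
    nth_rewrite 2 [heq]
    exact h1
  simpa using smul_eq_zero.1 h2

end PauliAux

/-- **Pauli's theorem, POV-measure form.**
On a nontrivial complex Hilbert space, a normalized POV-measure on the Borel sets of `ℝ`
that is covariant with respect to a positive-energy one-parameter unitary group of time
translations cannot be projection-valued: some `τ(X)` fails to be idempotent. -/
theorem covariant_pov_not_projection_valued
    {H : Type*} [NormedAddCommGroup H] [InnerProductSpace ℂ H] [CompleteSpace H]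
    (hnontriv : ∃ φ : H, φ ≠ 0)
    (τ : Set ℝ → (H →L[ℂ] H)) (U : ℝ → (H →L[ℂ] H))
    -- τ is a normalized POV-measure on the Borel sets of ℝ
    (hτ_pos : ∀ X : Set ℝ, MeasurableSet X → (τ X).IsPositive)
    (hτ_empty : τ ∅ = 0)
    (hτ_univ : τ Set.univ = 1)
    (hτ_add : ∀ X : ℕ → Set ℝ, (∀ i, MeasurableSet (X i)) →
      Pairwise (Function.onFun Disjoint X) → ∀ φ : H,
      HasSum (fun i => ⟪φ, τ (X i) φ⟫_ℂ) ⟪φ, τ (⋃ i, X i) φ⟫_ℂ)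
    -- U is a one-parameter unitary group
    (hU_unitary : ∀ l : ℝ,
      U l ∘L ContinuousLinearMap.adjoint (U l) = 1 ∧
      ContinuousLinearMap.adjoint (U l) ∘L U l = 1)
    (hU_zero : U 0 = 1)
    (hU_add : ∀ l m : ℝ, U (l + m) = U l ∘L U m)
    -- positive-energy condition: matrix elements of U extend to bounded continuous
    -- functions on the closed upper half-plane, holomorphic in the open half-plane
    (hU_posenergy : ∀ χ ψ : H, ∃ F : ℂ → ℂ,
      (∃ C : ℝ, ∀ z : ℂ, 0 ≤ z.im → ‖F z‖ ≤ C) ∧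
      ContinuousOn F {z : ℂ | 0 ≤ z.im} ∧
      DifferentiableOn ℂ F {z : ℂ | 0 < z.im} ∧
      ∀ l : ℝ, F (l : ℂ) = ⟪χ, U l ψ⟫_ℂ)
    -- covariance: U(λ) τ(X) U(λ)* = τ(X + λ)
    (hcov : ∀ X : Set ℝ, MeasurableSet X → ∀ l : ℝ,
      U l ∘L τ X ∘L ContinuousLinearMap.adjoint (U l) = τ ((· + l) '' X)) :
    ∃ X : Set ℝ, MeasurableSet X ∧ τ X ∘L τ X ≠ τ X := by
  by_contra hcontra
  push_neg at hcontra
  have hidem : ∀ X : Set ℝ, MeasurableSet X → τ X * τ X = τ X := fun X hX => hcontra X hX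
  -- finite additivity
  have hadd : ∀ A B : Set ℝ, MeasurableSet A → MeasurableSet B → Disjoint A B →
      τ (A ∪ B) = τ A + τ B := by
    intro A B hA hB hAB
    set Xf : ℕ → Set ℝ := fun i => if i = 0 then A else if i = 1 then B else ∅ with hXf
    have hXm : ∀ i, MeasurableSet (Xf i) := by
      intro i; dsimp [Xf]
      split
      · exact hA
      split
      · exact hB
      · exact MeasurableSet.empty
    have hXd : Pairwise (Function.onFun Disjoint Xf) := by
      intro i j hij
      unfold Function.onFun
      dsimp [Xf]
      split_ifs <;> simp_all [Set.disjoint_empty, Set.empty_disjoint, hAB, hAB.symm]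
    have hUnion : (⋃ i, Xf i) = A ∪ B := by
      ext x
      simp only [Set.mem_iUnion, Set.mem_union]
      constructor
      · rintro ⟨i, hx⟩
        dsimp [Xf] at hx
        split_ifs at hx
        · exact Or.inl hx
        · exact Or.inr hx
        · exact absurd hx (Set.notMem_empty x)
      · rintro (hx | hx)
        · exact ⟨0, by simp [Xf, hx]⟩
        · exact ⟨1, by simp [Xf, hx]⟩
    refine pauli_clm_eq_of_inner fun φ => ?_
    have h1 := hτ_add Xf hXm hXd φ
    rw [hUnion] at h1
    have h2 : HasSum (fun i => ⟪φ, τ (Xf i) φ⟫_ℂ) (⟪φ, τ A φ⟫_ℂ + ⟪φ, τ B φ⟫_ℂ) := by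
      have hvanish : ∀ i ∉ ({0, 1} : Finset ℕ), ⟪φ, τ (Xf i) φ⟫_ℂ = 0 := by
        intro i hi
        simp only [Finset.mem_insert, Finset.mem_singleton, not_or] at hi
        have hXi : Xf i = ∅ := by dsimp [Xf]; rw [if_neg hi.1, if_neg hi.2]
        rw [hXi, hτ_empty]
        simp
      have hhs := hasSum_sum_of_ne_finset_zero (L := SummationFilter.unconditional ℕ) hvanish
      have hsum : ∑ i ∈ ({0, 1} : Finset ℕ), ⟪φ, τ (Xf i) φ⟫_ℂ
          = ⟪φ, τ A φ⟫_ℂ + ⟪φ, τ B φ⟫_ℂ := by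
        rw [Finset.sum_pair (by norm_num)]
        congr 2
      rwa [hsum] at hhs
    rw [h1.unique h2, ContinuousLinearMap.add_apply, inner_add_right]
  -- orthogonality of disjoint measurable sets
  have horth : ∀ A B : Set ℝ, MeasurableSet A → MeasurableSet B → Disjoint A B →
      τ A * τ B = 0 := by
    intro A B hA hB hAB
    refine pauli_proj_orth (hidem A hA) (hidem B hB) ?_
    rw [← hadd A B hA hB hAB]
    exact hidem _ (hA.union hB)
  -- a nonvanishing interval
  obtain ⟨φ, hφ⟩ := hnontriv
  have hexists : ∃ c : ℝ, τ (Set.Ioc c (c + 1)) ≠ 0 := by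
    by_contra hall
    push_neg at hall
    set e : ℕ → ℤ := fun n => Equiv.intEquivNat.symm n with he
    set Xf : ℕ → Set ℝ := fun i => Set.Ioc ((e i : ℝ)) ((e i : ℝ) + 1) with hXf
    have hXm : ∀ i, MeasurableSet (Xf i) := fun i => measurableSet_Ioc
    have hXd : Pairwise (Function.onFun Disjoint Xf) := by
      intro i j hij
      have hne : e i ≠ e j := fun hc => hij (Equiv.intEquivNat.symm.injective hc)
      unfold Function.onFun
      dsimp [Xf]
      rw [Set.Ioc_disjoint_Ioc]
      rcases lt_or_gt_of_ne hne with hlt | hlt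
      · have hle : (e i : ℝ) + 1 ≤ (e j : ℝ) := by exact_mod_cast Int.add_one_le_iff.2 hlt
        exact le_trans (min_le_left _ _) (le_trans hle (le_max_right _ _))
      · have hle : (e j : ℝ) + 1 ≤ (e i : ℝ) := by exact_mod_cast Int.add_one_le_iff.2 hlt
        exact le_trans (min_le_right _ _) (le_trans hle (le_max_left _ _))
    have hUnion : (⋃ i, Xf i) = Set.univ := by
      ext x
      simp only [Set.mem_iUnion, Set.mem_univ, iff_true]
      refine ⟨Equiv.intEquivNat (⌈x⌉ - 1), ?_⟩
      dsimp [Xf, e]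
      rw [Equiv.symm_apply_apply]
      constructor
      · push_cast
        linarith [Int.ceil_lt_add_one x]
      · push_cast
        linarith [Int.le_ceil x]
    have h1 := hτ_add Xf hXm hXd φ
    rw [hUnion, hτ_univ] at h1
    have h2 : HasSum (fun i => ⟪φ, τ (Xf i) φ⟫_ℂ) 0 := by
      convert hasSum_zero with i
      rw [hall (e i)]
      simp
    have h3 : ⟪φ, (1 : H →L[ℂ] H) φ⟫_ℂ = 0 := h1.unique h2
    rw [ContinuousLinearMap.one_apply, inner_self_eq_zero] at h3
    exact hφ h3
  obtain ⟨c, hc⟩ := hexists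
  set X : Set ℝ := Set.Ioc c (c + 1) with hX_def
  have hXm : MeasurableSet X := measurableSet_Ioc
  obtain ⟨φ₀, hφ₀⟩ : ∃ φ₀ : H, τ X φ₀ ≠ 0 := by
    by_contra hz
    push_neg at hz
    exact hc (ContinuousLinearMap.ext fun v => by rw [hz v]; rfl)
  set ψ : H := τ X φ₀ with hψ_def
  have hfixψ : τ X ψ = ψ := by
    have := congrArg (fun T : H →L[ℂ] H => T φ₀) (hidem X hXm)
    simpa [hψ_def] using this
  have hsa : ContinuousLinearMap.adjoint (τ X) = τ X := (hτ_pos X hXm).isSelfAdjoint.adjoint_eq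
  -- covariance consequence
  have hUτ : ∀ l : ℝ, U l * τ X = τ ((· + l) '' X) * U l := by
    intro l
    have h1 : U l * τ X * ContinuousLinearMap.adjoint (U l) = τ ((· + l) '' X) := hcov X hXm l
    have h2 : ContinuousLinearMap.adjoint (U l) * U l = 1 := (hU_unitary l).2
    calc U l * τ X = U l * τ X * (ContinuousLinearMap.adjoint (U l) * U l) := by
          rw [h2, mul_one]
      _ = (U l * τ X * ContinuousLinearMap.adjoint (U l)) * U l := by
          noncomm_ring
      _ = τ ((· + l) '' X) * U l := by rw [h1]
  -- vanishing of matrix elements for |l| ≥ 1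
  have hvan : ∀ l : ℝ, 1 ≤ |l| → ⟪ψ, U l ψ⟫_ℂ = 0 := by
    intro l hl
    have himg : ((· + l) '' X) = Set.Ioc (c + l) (c + 1 + l) := by
      rw [hX_def]
      exact Set.image_add_const_Ioc l c (c + 1)
    have hdisj : Disjoint X ((· + l) '' X) := by
      rw [himg, hX_def, Set.Ioc_disjoint_Ioc]
      rcases le_abs.1 hl with h | h
      · exact le_trans (min_le_left _ _) (le_trans (by linarith) (le_max_right _ _))
      · exact le_trans (min_le_right _ _) (le_trans (by linarith) (le_max_left _ _))
    have himgm : MeasurableSet ((· + l) '' X) := by rw [himg]; exact measurableSet_Ioc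
    have hzero : τ X * (U l * τ X) = 0 := by
      rw [hUτ l, ← mul_assoc, horth X _ hXm himgm hdisj, zero_mul]
    calc ⟪ψ, U l ψ⟫_ℂ = ⟪τ X ψ, U l (τ X ψ)⟫_ℂ := by rw [hfixψ]
      _ = ⟪ψ, τ X (U l (τ X ψ))⟫_ℂ := by
          rw [← ContinuousLinearMap.adjoint_inner_left (τ X), hsa]
      _ = ⟪ψ, (τ X * (U l * τ X)) ψ⟫_ℂ := rfl
      _ = 0 := by rw [hzero]; simp
  -- positive energy
  obtain ⟨F, ⟨C, hbd⟩, hcont, hdiff, hreal⟩ := hU_posenergy ψ ψ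
  have hzero : ∀ x : ℝ, 1 ≤ |x| → F (x : ℂ) = 0 := by
    intro x hx
    rw [hreal x]
    exact hvan x hx
  have hF0 : F 0 = 0 := pauli_core_vanish hbd hcont hdiff hzero
  have hψne : ψ ≠ 0 := hφ₀
  have : F 0 = ⟪ψ, ψ⟫_ℂ := by
    rw [show (0 : ℂ) = ((0 : ℝ) : ℂ) by norm_num, hreal 0, hU_zero]
    simp
  rw [hF0] at this
  exact hψne (inner_self_eq_zero.1 this.symm)
end

section
/- Let F : ℂ → ℂ be bounded and continuous on the closed upper half-plane {z : Im z ≥ 0}, holomorphic on the open upper half-plane {z : Im z > 0}, and suppose there exists c > 0 such that F(x) = 0 for every real x with 0 ≤ x ≤ c. Then F(z) = 0 for every z with Im z ≥ 0. -/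
open Complex Set Filter Topology

private lemma aux_split {U : Set ℂ} (hUo : IsOpen U) (hUc : IsPreconnected U)
    {z₀ : ℂ} (hz₀ : z₀ ∈ U) {f g : ℂ → ℂ}
    (hf : AnalyticOnNhd ℂ f U) (hg : AnalyticOnNhd ℂ g U)
    (h : ∀ z ∈ U, f z * g z = 0) :
    (∀ z ∈ U, f z = 0) ∨ (∀ z ∈ U, g z = 0) := by
  rcases (hf z₀ hz₀).eventually_eq_zero_or_eventually_ne_zero with h1 | h2
  · exact Or.inl fun z hz =>
      hf.eqOn_zero_of_preconnected_of_eventuallyEq_zero hUc hz₀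
        (h1.mono fun w hw => by simpa using hw) hz
  · right
    intro z hz
    have hU' : ∀ᶠ w in 𝓝[≠] z₀, w ∈ U :=
      mem_nhdsWithin_of_mem_nhds (hUo.mem_nhds hz₀)
    have hg0 : ∀ᶠ w in 𝓝[≠] z₀, g w = 0 := by
      filter_upwards [h2, hU'] with w hw hwU
      rcases mul_eq_zero.1 (h w hwU) with h' | h'
      · exact absurd h' hw
      · exact h'
    exact hg.eqOn_zero_of_preconnected_of_frequently_eq_zero hUc hz₀ hg0.frequently hz

private lemma aux_prod_analytic {U : Set ℂ} (s : Finset ℤ) (f : ℤ → ℂ → ℂ)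
    (hf : ∀ i ∈ s, AnalyticOnNhd ℂ (f i) U) :
    AnalyticOnNhd ℂ (fun z => ∏ i ∈ s, f i z) U := by
  classical
  induction s using Finset.induction_on with
  | empty => simpa using (analyticOnNhd_const : AnalyticOnNhd ℂ (fun _ => (1:ℂ)) U)
  | insert _ _ ha ih =>
    rename_i a s
    simp only [Finset.prod_insert ha]
    exact (hf a (Finset.mem_insert_self a s)).mul
      (ih fun i hi => hf i (Finset.mem_insert_of_mem hi))

private lemma aux_prod_split {U : Set ℂ} (hUo : IsOpen U) (hUc : IsPreconnected U)
    {z₀ : ℂ} (hz₀ : z₀ ∈ U) (s : Finset ℤ) (f : ℤ → ℂ → ℂ)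
    (hf : ∀ i ∈ s, AnalyticOnNhd ℂ (f i) U)
    (h : ∀ z ∈ U, ∏ i ∈ s, f i z = 0) :
    ∃ i ∈ s, ∀ z ∈ U, f i z = 0 := by
  classical
  induction s using Finset.induction_on with
  | empty => simpa using h z₀ hz₀
  | insert _ _ ha ih =>
    rename_i a s
    simp only [Finset.prod_insert ha] at h
    rcases aux_split hUo hUc hz₀ (hf a (Finset.mem_insert_self a s))
        (aux_prod_analytic s f fun i hi => hf i (Finset.mem_insert_of_mem hi)) h with h' | h'
    · exact ⟨a, Finset.mem_insert_self a s, h'⟩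
    · obtain ⟨i, hi, hi'⟩ := ih (fun i hi => hf i (Finset.mem_insert_of_mem hi)) h'
      exact ⟨i, Finset.mem_insert_of_mem hi, hi'⟩

private lemma aux_sqrt (z : ℂ) (hz : 0 ≤ z.im) :
    ∃ w : ℂ, 0 ≤ w.re ∧ 0 ≤ w.im ∧ w ^ 2 = z := by
  rcases eq_or_ne z 0 with rfl | hz0
  · exact ⟨0, le_rfl, le_rfl, by simp⟩
  have harg0 : 0 ≤ z.arg := arg_nonneg_iff.2 hz
  have hargpi : z.arg ≤ Real.pi := z.arg_le_pi
  have hpi := Real.pi_pos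
  refine ⟨(Real.sqrt ‖z‖ : ℂ) * Complex.exp ((z.arg / 2 : ℝ) * I), ?_, ?_, ?_⟩
  · rw [re_ofReal_mul, exp_ofReal_mul_I_re]
    exact mul_nonneg (Real.sqrt_nonneg _)
      (Real.cos_nonneg_of_mem_Icc ⟨by linarith, by linarith⟩)
  · rw [im_ofReal_mul, exp_ofReal_mul_I_im]
    exact mul_nonneg (Real.sqrt_nonneg _)
      (Real.sin_nonneg_of_nonneg_of_le_pi (by linarith) (by linarith))
  · rw [mul_pow, ← Complex.exp_nat_mul, ← ofReal_pow, Real.sq_sqrt (norm_nonneg z)]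
    have : ((2:ℕ) : ℂ) * ((z.arg / 2 : ℝ) * I) = (z.arg : ℝ) * I := by
      push_cast; ring
    rw [this, norm_mul_exp_arg_mul_I]

/-- **Riemann–Schwarz reflection step.**
A function bounded and continuous on the closed upper half-plane, holomorphic on the open
upper half-plane, which vanishes on a real interval `[0, c]` (with `c > 0`), vanishes
identically on the closed upper half-plane. -/
theorem vanishing_on_interval_implies_zero_upper_half_plane
    (F : ℂ → ℂ)
    (hbdd : ∃ C : ℝ, ∀ z : ℂ, 0 ≤ z.im → ‖F z‖ ≤ C)
    (hcont : ContinuousOn F {z : ℂ | 0 ≤ z.im})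
    (hdiff : DifferentiableOn ℂ F {z : ℂ | 0 < z.im})
    (c : ℝ) (hc : 0 < c)
    (hvanish : ∀ x : ℝ, 0 ≤ x → x ≤ c → F (x : ℂ) = 0) :
    ∀ z : ℂ, 0 ≤ z.im → F z = 0 := by
  obtain ⟨C, hC⟩ := hbdd
  set S : Set ℂ := {z : ℂ | 0 ≤ z.im} with hSdef
  set U : Set ℂ := {z : ℂ | 0 < z.im} with hUdef
  have hUo : IsOpen U := isOpen_lt continuous_const continuous_im
  have hUc : IsPreconnected U := (convex_halfSpace_im_gt 0).isPreconnected
  have hIU : I ∈ U := by simp [hUdef]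
  have hUS : U ⊆ S := fun z hz => le_of_lt (show 0 < z.im from hz)
  set C₀ : ℝ := max C 0 with hC₀def
  have hC₀0 : 0 ≤ C₀ := le_max_right _ _
  have hFb : ∀ z ∈ S, ‖F z‖ ≤ C₀ := fun z hz => (hC z hz).trans (le_max_left _ _)
  set N : ℕ := ⌈(2 / c) / c⌉₊ + 1 with hNdef
  set T : Finset ℤ := Finset.Icc (-(N : ℤ)) (N : ℤ) with hTdef
  set m : ℂ → ℂ := fun z => ((c / 2 : ℝ) : ℂ) - z⁻¹ with hmdef
  set A : ℂ → ℂ := fun z => z / (z + I) with hAdef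
  set P : ℂ → ℂ := fun z => ∏ k ∈ T, F (z - (k : ℂ) * (c : ℂ)) with hPdef
  set G : ℂ → ℂ := fun z => A z * (F (m z) * P z) with hGdef
  set K : ℝ := C₀ * C₀ ^ T.card with hKdef
  -- basic mapping facts
  have himm : ∀ z : ℂ, (m z).im = z.im / normSq z := by
    intro z
    simp [hmdef, sub_im, ofReal_im, inv_im, neg_div]
  have hmS : ∀ z ∈ S, m z ∈ S := by
    intro z hz
    show (0:ℝ) ≤ (m z).im
    rw [himm]
    exact div_nonneg hz (normSq_nonneg _)
  have hmU : ∀ z ∈ U, m z ∈ U := by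
    intro z hz
    have hz0 : z ≠ 0 := fun h => by simp [hUdef, h] at hz
    show (0:ℝ) < (m z).im
    rw [himm]
    exact div_pos hz (normSq_pos.2 hz0)
  have htS : ∀ (k : ℤ), ∀ z ∈ S, z - (k : ℂ) * (c : ℂ) ∈ S := by
    intro k z hz; simpa [hSdef] using hz
  have htU : ∀ (k : ℤ), ∀ z ∈ U, z - (k : ℂ) * (c : ℂ) ∈ U := by
    intro k z hz; simpa [hUdef] using hz
  have hsqS : ∀ w : ℂ, 0 ≤ w.re → 0 ≤ w.im → w ^ 2 ∈ S := by
    intro w h1 h2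
    simp only [hSdef, mem_setOf_eq, pow_two, mul_im]
    positivity
  have hsqU : ∀ w : ℂ, 0 < w.re → 0 < w.im → w ^ 2 ∈ U := by
    intro w h1 h2
    simp only [hUdef, mem_setOf_eq, pow_two, mul_im]
    positivity
  have hdenom : ∀ z ∈ S, z + I ≠ 0 := by
    intro z hz h
    have := congrArg Complex.im h
    simp only [add_im, I_im, zero_im] at this
    simp only [hSdef, mem_setOf_eq] at hz
    linarith
  -- norm bounds
  have hA1 : ∀ z ∈ S, ‖A z‖ ≤ 1 := by
    intro z hz
    have h2 : ‖z‖ ≤ ‖z + I‖ := by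
      have : normSq z ≤ normSq (z + I) := by
        simp only [normSq_apply, add_re, add_im, I_re, I_im]
        have : (0:ℝ) ≤ z.im := hz
        nlinarith
      simpa [Complex.norm_def] using Real.sqrt_le_sqrt this
    have hpos : 0 < ‖z + I‖ := norm_pos_iff.2 (hdenom z hz)
    simp only [hAdef, norm_div]
    rw [div_le_one hpos]
    simpa using h2
  have hFPb : ∀ z ∈ S, ‖F (m z) * P z‖ ≤ K := by
    intro z hz
    rw [norm_mul, hKdef]
    have h1 : ‖F (m z)‖ ≤ C₀ := hFb _ (hmS z hz)
    have h2 : ‖P z‖ ≤ C₀ ^ T.card := by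
      rw [hPdef]
      calc ‖∏ k ∈ T, F (z - (k : ℂ) * (c : ℂ))‖
          = ∏ k ∈ T, ‖F (z - (k : ℂ) * (c : ℂ))‖ := by simp [norm_prod]
        _ ≤ ∏ _k ∈ T, C₀ := Finset.prod_le_prod (fun i _ => norm_nonneg _)
            (fun i _ => hFb _ (htS i z hz))
        _ = C₀ ^ T.card := Finset.prod_const _
    exact mul_le_mul h1 h2 (norm_nonneg _) hC₀0
  -- vanishing on the real axis
  have hG0 : ∀ x : ℝ, G (x : ℂ) = 0 := by
    intro x
    rcases le_or_gt (2 / c) |x| with hx | hx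
    · -- use the inversion factor
      have hx0 : x ≠ 0 := by
        intro h
        rw [h, abs_zero] at hx
        have : (0:ℝ) < 2 / c := by positivity
        linarith
      have hinv : |x⁻¹| ≤ c / 2 := by
        rw [abs_inv]
        have h1 : (0:ℝ) < 2 / c := by positivity
        have h2 : |x|⁻¹ ≤ (2 / c)⁻¹ := inv_anti₀ h1 hx
        rwa [inv_div] at h2
      have hF : F (m (x : ℂ)) = 0 := by
        have hmx : m (x : ℂ) = ((c / 2 - x⁻¹ : ℝ) : ℂ) := by
          simp [hmdef]
        rw [hmx]
        apply hvanish
        · have := (abs_le.1 hinv).2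
          linarith
        · have := (abs_le.1 hinv).1
          linarith
      rw [hGdef]
      simp [hF]
    · -- use a translation factor
      set k : ℤ := ⌊x / c⌋ with hk
      have hkc1 : (k : ℝ) * c ≤ x := by
        have := Int.floor_le (x / c)
        calc (k : ℝ) * c ≤ (x / c) * c := by
              apply mul_le_mul_of_nonneg_right this hc.le
          _ = x := by field_simp
      have hkc2 : x < ((k : ℝ) + 1) * c := by
        have := Int.lt_floor_add_one (x / c)
        calc x = (x / c) * c := by field_simp
          _ < ((k : ℝ) + 1) * c := by
              apply mul_lt_mul_of_pos_right this hc
      have hkT : k ∈ T := by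
        rw [hTdef, Finset.mem_Icc]
        have hceil : (2 / c) / c ≤ (⌈(2 / c) / c⌉₊ : ℝ) := Nat.le_ceil _
        have hNcast : (N : ℝ) = (⌈(2 / c) / c⌉₊ : ℝ) + 1 := by
          rw [hNdef]; push_cast; ring
        have h1 : (k : ℝ) ≤ x / c := Int.floor_le _
        have h2 : x / c - 1 < (k : ℝ) := Int.sub_one_lt_floor _
        have h3 : x / c ≤ |x| / c := by gcongr; exact le_abs_self x
        have h4 : |x| / c < (2 / c) / c := by gcongr
        have h5 : -(|x| / c) ≤ x / c := by
          rw [← neg_div]; gcongr; exact neg_abs_le x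
        constructor
        · have : -((N : ℝ)) ≤ (k : ℝ) := by rw [hNcast]; linarith
          exact_mod_cast this
        · have : (k : ℝ) ≤ (N : ℝ) := by rw [hNcast]; linarith
          exact_mod_cast this
      have hfac : F ((x : ℂ) - (k : ℂ) * (c : ℂ)) = 0 := by
        have : ((x : ℂ) - (k : ℂ) * (c : ℂ)) = ((x - k * c : ℝ) : ℂ) := by push_cast; ring
        rw [this]
        apply hvanish
        · linarith
        · nlinarith
      have hP : P (x : ℂ) = 0 := Finset.prod_eq_zero hkT hfac
      rw [hGdef]
      simp [hP]
  -- continuity on S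
  have hA_cont : ContinuousOn A S := by
    intro z hz
    exact (ContinuousAt.div continuousAt_id
      ((continuous_id.add continuous_const).continuousAt) (hdenom z hz)).continuousWithinAt
  have hP_cont : ContinuousOn P S := by
    rw [hPdef]
    apply continuousOn_finset_prod
    intro k _
    exact hcont.comp ((continuous_id.sub continuous_const).continuousOn)
      (fun z hz => htS k z hz)
  have hGcont : ContinuousOn G S := by
    intro z hz
    rcases eq_or_ne z 0 with rfl | hz0
    · have h0S : (0:ℂ) ∈ S := by show (0:ℝ) ≤ (0:ℂ).im; simp
      have hG00 : G 0 = 0 := by simp [hGdef, hAdef]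
      show ContinuousWithinAt G S 0
      rw [ContinuousWithinAt, hG00]
      apply squeeze_zero_norm' (a := fun w => ‖A w‖ * K)
      · filter_upwards [self_mem_nhdsWithin] with w hw
        rw [hGdef]
        show ‖A w * (F (m w) * P w)‖ ≤ ‖A w‖ * K
        rw [norm_mul]
        exact mul_le_mul_of_nonneg_left (hFPb w hw) (norm_nonneg _)
      · have hAt : Tendsto A (𝓝[S] 0) (𝓝 (A 0)) := hA_cont 0 h0S
        have hA00 : A 0 = 0 := by simp [hAdef]
        rw [hA00] at hAt
        have := (hAt.norm).mul_const K
        simpa using this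
    · have hmc : ContinuousWithinAt m S z := by
        apply ContinuousAt.continuousWithinAt
        exact continuousAt_const.sub (continuousAt_inv₀ hz0)
      have hFm : ContinuousWithinAt (fun w => F (m w)) S z :=
        ContinuousWithinAt.comp (hcont (m z) (hmS z hz)) hmc (fun w hw => hmS w hw)
      exact ((hA_cont z hz).mul (hFm.mul (hP_cont z hz)))
  -- differentiability on U
  have hA_diff : DifferentiableOn ℂ A U := by
    intro z hz
    exact (DifferentiableAt.div differentiableAt_id
      (differentiableAt_id.add_const I) (hdenom z (hUS hz))).differentiableWithinAt
  have hP_diff : DifferentiableOn ℂ P U := by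
    rw [hPdef]
    apply DifferentiableOn.fun_finsetProd
    intro k _
    exact hdiff.comp ((differentiable_id.sub_const _).differentiableOn)
      (fun z hz => htU k z hz)
  have hFm_diff : DifferentiableOn ℂ (fun w => F (m w)) U := by
    apply DifferentiableOn.comp hdiff ?_ (fun z hz => hmU z hz)
    intro z hz
    have hz0 : z ≠ 0 := fun h => by simp [hUdef, h] at hz
    exact ((differentiableAt_const _).sub (differentiableAt_inv hz0)).differentiableWithinAt
  have hGdiff : DifferentiableOn ℂ G U :=
    hA_diff.mul (hFm_diff.mul hP_diff)
  -- Phragmen-Lindelof on the first quadrant for w ↦ G (w^2)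
  have hGzero : ∀ z ∈ S, G z = 0 := by
    have hQ : EqOn (fun w => G (w ^ 2)) 0 {z : ℂ | 0 ≤ z.re ∧ 0 ≤ z.im} := by
      apply PhragmenLindelof.eq_zero_on_quadrant_I
      · constructor
        · apply hGdiff.comp ((differentiable_pow 2).differentiableOn)
          intro w hw
          rw [mem_reProdIm] at hw
          exact hsqU w hw.1 hw.2
        · rw [closure_reProdIm, closure_Ioi]
          apply hGcont.comp ((continuous_pow 2).continuousOn)
          intro w hw
          rw [mem_reProdIm] at hw
          exact hsqS w hw.1 hw.2
      · refine ⟨1, one_lt_two, 0, ?_⟩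
        apply Asymptotics.IsBigO.of_bound K
        rw [eventually_inf_principal]
        apply Eventually.of_forall
        intro w hw
        rw [mem_reProdIm] at hw
        have hwS : w ^ 2 ∈ S := hsqS w (le_of_lt hw.1) (le_of_lt hw.2)
        simp only [zero_mul, Real.exp_zero, norm_one, mul_one]
        calc ‖G (w ^ 2)‖ = ‖A (w^2)‖ * ‖F (m (w^2)) * P (w^2)‖ := by
              rw [hGdef]; exact norm_mul _ _
          _ ≤ 1 * K := mul_le_mul (hA1 _ hwS) (hFPb _ hwS) (norm_nonneg _) one_pos.le
          _ = K := one_mul K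
      · intro x hx
        show G ((x:ℂ) ^ 2) = 0
        have hx2 : ((x:ℂ))^2 = ((x^2 : ℝ) : ℂ) := by push_cast; ring
        rw [hx2]; exact hG0 _
      · intro x hx
        show G (((x:ℂ) * I) ^ 2) = 0
        have hx2 : ((x:ℂ) * I)^2 = ((-(x^2) : ℝ) : ℂ) := by
          rw [mul_pow, I_sq]; push_cast; ring
        rw [hx2]; exact hG0 _
    intro z hz
    obtain ⟨w, hw1, hw2, hw3⟩ := aux_sqrt z (show (0:ℝ) ≤ z.im from hz)
    have := hQ (show w ∈ {z : ℂ | 0 ≤ z.re ∧ 0 ≤ z.im} from ⟨hw1, hw2⟩)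
    simp only [Pi.zero_apply] at this
    rw [hw3] at this
    exact this
  -- peel off factors
  have hFm_an : AnalyticOnNhd ℂ (fun w => F (m w)) U := hFm_diff.analyticOnNhd hUo
  have hfk_an : ∀ k ∈ T, AnalyticOnNhd ℂ (fun z => F (z - (k:ℂ) * (c:ℂ))) U := by
    intro k _
    exact (hdiff.comp ((differentiable_id.sub_const _).differentiableOn)
      (fun z hz => htU k z hz)).analyticOnNhd hUo
  have hFU : ∀ z ∈ U, F z = 0 := by
    have hFmP : ∀ z ∈ U, F (m z) * P z = 0 := by
      intro z hz
      have hz0 : z ≠ 0 := fun h => by simp [hUdef, h] at hz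
      have hA0 : A z ≠ 0 := div_ne_zero hz0 (hdenom z (hUS hz))
      have h := hGzero z (hUS hz)
      rw [hGdef] at h
      exact (mul_eq_zero.1 h).resolve_left hA0
    have hP_an : AnalyticOnNhd ℂ P U := by
      rw [hPdef]; exact aux_prod_analytic T _ hfk_an
    rcases aux_split hUo hUc hIU hFm_an hP_an hFmP with h | h
    · -- the inversion factor vanishes identically
      intro z hz
      have hzim : (0:ℝ) < z.im := hz
      have hcz : ((c/2 : ℝ):ℂ) - z ≠ 0 := by
        intro hcz
        have := congrArg Complex.im hcz
        simp only [sub_im, ofReal_im, zero_sub, zero_im] at this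
        linarith
      set w : ℂ := (((c/2 : ℝ):ℂ) - z)⁻¹ with hwdef
      have hwU : w ∈ U := by
        show (0:ℝ) < w.im
        rw [hwdef, inv_im]
        simp only [sub_im, ofReal_im, zero_sub, neg_neg]
        exact div_pos hzim (normSq_pos.2 hcz)
      have hmw : m w = z := by
        show ((c/2 : ℝ):ℂ) - w⁻¹ = z
        rw [hwdef, inv_inv]
        ring
      have := h w hwU
      rw [hmw] at this
      exact this
    · -- a translation factor vanishes identically
      obtain ⟨k, hkT, hk⟩ := aux_prod_split hUo hUc hIU T _ hfk_an (by
        intro z hz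
        have := h z hz
        rw [hPdef] at this
        exact this)
      intro z hz
      have hzU : z + (k:ℂ) * (c:ℂ) ∈ U := by
        show (0:ℝ) < (z + (k:ℂ) * (c:ℂ)).im
        have : (0:ℝ) < z.im := hz
        simp only [add_im, mul_im, intCast_im, ofReal_im, intCast_re, ofReal_re,
          mul_zero, zero_mul, add_zero]
        simpa using this
      have := hk (z + (k:ℂ) * (c:ℂ)) hzU
      simpa using this
  -- boundary by continuity
  intro z hz
  have hz' : (0:ℝ) ≤ z.im := hz
  have him : ∀ t : ℝ, (z + (t : ℂ) * I).im = z.im + t := by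
    intro t; simp
  have h1 : Tendsto (fun t : ℝ => z + (t : ℂ) * I) (𝓝[>] (0:ℝ)) (𝓝[S] z) := by
    apply tendsto_nhdsWithin_of_tendsto_nhds_of_eventually_within
    · have h0 : Tendsto (fun t : ℝ => z + (t : ℂ) * I) (𝓝 (0:ℝ)) (𝓝 (z + ((0:ℝ) : ℂ) * I)) :=
        (continuous_const.add ((continuous_ofReal).mul continuous_const)).tendsto 0
      have h0' : Tendsto (fun t : ℝ => z + (t : ℂ) * I) (𝓝 (0:ℝ)) (𝓝 z) := by simpa using h0
      exact h0'.mono_left nhdsWithin_le_nhds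
    · filter_upwards [self_mem_nhdsWithin] with t ht
      have ht' : (0:ℝ) < t := ht
      show (0:ℝ) ≤ (z + (t : ℂ) * I).im
      rw [him]; linarith
  have h2 : Tendsto (fun t : ℝ => F (z + (t : ℂ) * I)) (𝓝[>] (0:ℝ)) (𝓝 (F z)) :=
    (hcont z hz).tendsto.comp h1
  have h3 : ∀ᶠ t : ℝ in 𝓝[>] (0:ℝ), F (z + (t : ℂ) * I) = 0 := by
    filter_upwards [self_mem_nhdsWithin] with t ht
    have ht' : (0:ℝ) < t := ht
    apply hFU
    show (0:ℝ) < (z + (t : ℂ) * I).im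
    rw [him]; linarith
  exact tendsto_nhds_unique (h2.congr' (show (fun t : ℝ => F (z + (t:ℂ)*I)) =ᶠ[𝓝[>] (0:ℝ)] (fun _ => 0) from h3.mono fun t ht => ht)) tendsto_const_nhds
end

section
/- Let f, g ∈ L²(ℝ, ℂ) and define F : ℂ → ℂ by F(z) = ∫_ℝ conj(g(p)) · exp(i z p²/2) · f(p) dp for Im z ≥ 0. Then F is well defined, bounded and continuous on the closed upper half-plane {z : Im z ≥ 0}, holomorphic on the open upper half-plane {z : Im z > 0}, and for real λ it equals the inner product ⟨g, U(λ)f⟩, where U(λ) is the unitary operator of multiplication by exp(i λ p²/2) on L²(ℝ). -/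
open MeasureTheory Complex
open scoped ComplexConjugate

private lemma re_calc' (z : ℂ) (p : ℝ) : (Complex.I * z * (p:ℂ)^2 / 2).re = -z.im * p^2 / 2 := by
  simp [Complex.div_re, Complex.mul_re, Complex.mul_im, ← Complex.ofReal_pow]

private lemma exp_norm' (z : ℂ) (p : ℝ) :
    ‖Complex.exp (Complex.I * z * (p:ℂ)^2 / 2)‖ = Real.exp (-z.im * p^2 / 2) := by
  rw [Complex.norm_exp, re_calc']

private lemma exp_norm_le' (z : ℂ) (p : ℝ) (hz : 0 ≤ z.im) :
    ‖Complex.exp (Complex.I * z * (p:ℂ)^2 / 2)‖ ≤ 1 := by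
  rw [exp_norm']
  apply Real.exp_le_one_iff.2
  nlinarith [sq_nonneg p]

private lemma exp_deriv' (p : ℝ) (z : ℂ) :
    HasDerivAt (fun w : ℂ => Complex.exp (Complex.I * w * (p:ℂ)^2 / 2))
      (Complex.I * (p:ℂ)^2 / 2 * Complex.exp (Complex.I * z * (p:ℂ)^2 / 2)) z := by
  have h1 : (fun w : ℂ => Complex.exp (Complex.I * w * (p:ℂ)^2 / 2))
      = fun w => Complex.exp (Complex.I * (p:ℂ)^2 / 2 * w) := by
    funext w; congr 1; ring
  rw [h1]
  have h2 := ((hasDerivAt_id z).const_mul (Complex.I * (p:ℂ)^2 / 2)).cexp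
  simp only [id_eq] at h2
  refine h2.congr_deriv ?_
  rw [show Complex.I * (p:ℂ)^2 / 2 * z = Complex.I * z * (p:ℂ)^2 / 2 by ring]
  ring

/-- **Positive-energy property of the free Hamiltonian `H = p²/2`.**
For `f, g ∈ L²(ℝ, ℂ)`, the function `F(z) = ∫ conj(g(p)) exp(i z p²/2) f(p) dp` is well
defined (the integrand is integrable for `Im z ≥ 0`), bounded and continuous on the closed
upper half-plane, holomorphic on the open upper half-plane, and for real `λ` it equals the
inner product `⟨g, U(λ) f⟩` where `U(λ)` is multiplication by `exp(i λ p²/2)`. -/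
theorem free_hamiltonian_positive_energy
    (f g : ℝ → ℂ)
    (hf : MemLp f 2 (volume : Measure ℝ)) (hg : MemLp g 2 (volume : Measure ℝ)) :
    -- well defined: the integrand is (Bochner) integrable for every z with Im z ≥ 0
    (∀ z : ℂ, 0 ≤ z.im → Integrable
      (fun p : ℝ => conj (g p) * Complex.exp (Complex.I * z * (p : ℂ) ^ 2 / 2) * f p)) ∧
    -- bounded on the closed upper half-plane
    (∃ C : ℝ, ∀ z : ℂ, 0 ≤ z.im →
      ‖∫ p : ℝ, conj (g p) * Complex.exp (Complex.I * z * (p : ℂ) ^ 2 / 2) * f p‖ ≤ C) ∧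
    -- continuous on the closed upper half-plane
    ContinuousOn
      (fun z : ℂ => ∫ p : ℝ, conj (g p) * Complex.exp (Complex.I * z * (p : ℂ) ^ 2 / 2) * f p)
      {z : ℂ | 0 ≤ z.im} ∧
    -- holomorphic on the open upper half-plane
    DifferentiableOn ℂ
      (fun z : ℂ => ∫ p : ℝ, conj (g p) * Complex.exp (Complex.I * z * (p : ℂ) ^ 2 / 2) * f p)
      {z : ℂ | 0 < z.im} ∧
    -- on the real axis it is the inner product ⟨g, U(λ)f⟩, U(λ) multiplication by exp(iλp²/2)
    ∀ l : ℝ,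
      (∫ p : ℝ, conj (g p) * Complex.exp (Complex.I * (l : ℂ) * (p : ℂ) ^ 2 / 2) * f p) =
      ∫ p : ℝ, conj (g p) * (Complex.exp (Complex.I * (l : ℂ) * (p : ℂ) ^ 2 / 2) * f p) := by
    -- conj g ∈ L²
  have hgc : MemLp (fun p => (conj (g p) : ℂ)) 2 (volume : Measure ℝ) := by
    refine MemLp.of_le hg ?_ (Filter.Eventually.of_forall fun p => by simp)
    exact Complex.continuous_conj.comp_aestronglyMeasurable hg.1
  -- conj g * f ∈ L¹
  have hgf : Integrable (fun p : ℝ => conj (g p) * f p) volume := by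
    rw [← memLp_one_iff_integrable]
    have := hf.smul (p := 2) (q := 2) (r := 1) hgc (hpqr := ⟨by simp only [inv_one]; exact ENNReal.inv_two_add_inv_two⟩)
    exact this
  have hbound : Integrable (fun p : ℝ => ‖g p‖ * ‖f p‖) volume := by
    have := hgf.norm
    simpa [norm_mul] using this
  -- measurability of the integrand for each z
  have hmeas : ∀ z : ℂ, AEStronglyMeasurable
      (fun p : ℝ => conj (g p) * Complex.exp (Complex.I * z * (p : ℂ) ^ 2 / 2) * f p) volume := by
    intro z
    apply AEStronglyMeasurable.mul _ hf.1
    apply AEStronglyMeasurable.mul hgc.1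
    exact (Continuous.aestronglyMeasurable (by fun_prop))
  -- pointwise bound
  have hptle : ∀ z : ℂ, 0 ≤ z.im → ∀ p : ℝ,
      ‖conj (g p) * Complex.exp (Complex.I * z * (p : ℂ) ^ 2 / 2) * f p‖ ≤ ‖g p‖ * ‖f p‖ := by
    intro z hz p
    rw [norm_mul, norm_mul, RCLike.norm_conj]
    calc ‖g p‖ * ‖Complex.exp (Complex.I * z * (p:ℂ)^2/2)‖ * ‖f p‖
        ≤ ‖g p‖ * 1 * ‖f p‖ := by
          gcongr
          exact exp_norm_le' z p hz
      _ = ‖g p‖ * ‖f p‖ := by ring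
  have hint : ∀ z : ℂ, 0 ≤ z.im → Integrable
      (fun p : ℝ => conj (g p) * Complex.exp (Complex.I * z * (p : ℂ) ^ 2 / 2) * f p) := by
    intro z hz
    exact hbound.mono' (hmeas z) (Filter.Eventually.of_forall (hptle z hz))
  refine ⟨hint, ?_, ?_, ?_, ?_⟩
  · -- boundedness
    refine ⟨∫ p, ‖g p‖ * ‖f p‖, fun z hz => ?_⟩
    calc ‖∫ p : ℝ, conj (g p) * Complex.exp (Complex.I * z * (p : ℂ) ^ 2 / 2) * f p‖
        ≤ ∫ p : ℝ, ‖conj (g p) * Complex.exp (Complex.I * z * (p : ℂ) ^ 2 / 2) * f p‖ :=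
          norm_integral_le_integral_norm _
      _ ≤ ∫ p, ‖g p‖ * ‖f p‖ :=
          integral_mono (hint z hz).norm hbound (hptle z hz)
  · -- continuity
    apply continuousOn_of_dominated (bound := fun p => ‖g p‖ * ‖f p‖)
    · intro z hz; exact hmeas z
    · intro z hz
      exact Filter.Eventually.of_forall (hptle z hz)
    · exact hbound
    · apply Filter.Eventually.of_forall
      intro p
      apply Continuous.continuousOn
      fun_prop
  · -- holomorphy
    intro z₀ hz₀
    simp only [Set.mem_setOf_eq] at hz₀
    set ε := z₀.im / 2 with hε
    have hεpos : 0 < ε := by positivity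
    -- inside the ball of radius ε, Im z ≥ ε
    have him : ∀ z ∈ Metric.ball z₀ ε, ε ≤ z.im := by
      intro z hz
      have h1 : |z.im - z₀.im| ≤ ‖z - z₀‖ := by
        simpa using Complex.abs_im_le_norm (z - z₀)
      have h2 : ‖z - z₀‖ < ε := by simpa [dist_eq_norm] using hz
      have := abs_le.1 (le_of_lt (lt_of_le_of_lt h1 h2))
      have hz0 : z₀.im = 2 * ε := by rw [hε]; ring
      linarith [this.1]
    -- derivative bound : ‖g p‖‖f p‖ * (1/ε)
    have hderiv_bound : ∀ z ∈ Metric.ball z₀ ε, ∀ p : ℝ,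
        ‖conj (g p) * (Complex.I * (p:ℂ)^2 / 2 * Complex.exp (Complex.I * z * (p:ℂ)^2 / 2)) * f p‖
          ≤ ‖g p‖ * ‖f p‖ * (1/ε) := by
      intro z hz p
      have himz := him z hz
      rw [norm_mul, norm_mul, RCLike.norm_conj, norm_mul]
      have h1 : ‖Complex.I * (p:ℂ)^2 / 2‖ = p^2/2 := by
        simp [norm_div, ← Complex.ofReal_pow, _root_.abs_of_nonneg (sq_nonneg p)]
      rw [h1, exp_norm']
      have key : p^2/2 * Real.exp (-z.im * p^2/2) ≤ 1/ε := by
        set t : ℝ := p^2/2 with ht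
        have ht0 : 0 ≤ t := by positivity
        have h3 : Real.exp (-z.im * p^2/2) ≤ Real.exp (-(ε * t)) := by
          apply Real.exp_le_exp.2
          nlinarith [sq_nonneg p]
        have h4 : ε * t + 1 ≤ Real.exp (ε * t) := Real.add_one_le_exp (ε * t)
        have hexp : 0 < Real.exp (ε * t) := Real.exp_pos _
        have h6 : ε * (t * Real.exp (-(ε * t))) ≤ 1 := by
          rw [Real.exp_neg, show ε * (t * (Real.exp (ε * t))⁻¹) = (ε * t) / Real.exp (ε * t) by ring]
          exact (div_le_one hexp).2 (by linarith)
        have h5 : t * Real.exp (-z.im * p^2/2) ≤ t * Real.exp (-(ε * t)) :=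
          mul_le_mul_of_nonneg_left h3 ht0
        refine h5.trans ?_
        rw [le_div_iff₀ hεpos]
        nlinarith [h6]
      calc ‖g p‖ * (p^2/2 * Real.exp (-z.im * p^2/2)) * ‖f p‖
          ≤ ‖g p‖ * (1/ε) * ‖f p‖ := by gcongr
        _ = ‖g p‖ * ‖f p‖ * (1/ε) := by ring
    have := hasDerivAt_integral_of_dominated_loc_of_deriv_le (μ := (volume : Measure ℝ))
      (F := fun z p => conj (g p) * Complex.exp (Complex.I * z * (p:ℂ)^2 / 2) * f p)
      (F' := fun z p => conj (g p) * (Complex.I * (p:ℂ)^2 / 2 * Complex.exp (Complex.I * z * (p:ℂ)^2 / 2)) * f p)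
      (x₀ := z₀) (bound := fun p => ‖g p‖ * ‖f p‖ * (1/ε)) (Metric.ball_mem_nhds z₀ hεpos)
      (Filter.Eventually.of_forall fun z => hmeas z)
      (hint z₀ (le_of_lt hz₀))
      ?_ ?_ ?_ ?_
    · exact ((this.2.differentiableAt).differentiableWithinAt)
    · -- measurability of F' z₀
      apply AEStronglyMeasurable.mul _ hf.1
      apply AEStronglyMeasurable.mul hgc.1
      exact (Continuous.aestronglyMeasurable (by fun_prop))
    · exact Filter.Eventually.of_forall fun p => fun z hz => hderiv_bound z hz p
    · exact (hbound.mul_const (1/ε))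
    · apply Filter.Eventually.of_forall
      intro p z hz
      exact ((exp_deriv' p z).const_mul (conj (g p))).mul_const (f p)
  · -- equality on the real axis
    intro l
    simp only [mul_assoc]
end

section
/- A normalized POV-measure is projection-valued if and only if it is multiplicative: let 𝓗 be a complex Hilbert space and τ a normalized POV-measure on a measurable space (Ω, 𝓕) with values in the bounded operators on 𝓗; then (τ(X) ∘ τ(X) = τ(X) for every X ∈ 𝓕) if and only if (τ(X ∩ Y) = τ(X) ∘ τ(Y) for all X, Y ∈ 𝓕). -/
open MeasureTheory
open scoped InnerProductSpace

private lemma clm_ext_inner {H : Type*} [NormedAddCommGroup H] [InnerProductSpace ℂ H]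
    (A B : H →L[ℂ] H) (h : ∀ φ : H, ⟪φ, A φ⟫_ℂ = ⟪φ, B φ⟫_ℂ) : A = B := by
  have : (A : H →ₗ[ℂ] H) = (B : H →ₗ[ℂ] H) := by
    rw [← ext_inner_map]
    intro x
    have := congrArg (starRingEnd ℂ) (h x)
    simpa [inner_conj_symm] using this
  ext x
  exact congrFun (congrArg DFunLike.coe this) x

/-- **A normalized POV-measure is projection-valued iff it is multiplicative.**
Let `τ` be a normalized POV-measure on a measurable space `(Ω, 𝓕)` with values in the
bounded operators of a complex Hilbert space `H`. Then `τ(X)² = τ(X)` for every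
measurable `X` if and only if `τ(X ∩ Y) = τ(X) τ(Y)` for all measurable `X, Y`. -/
theorem pov_idempotent_iff_multiplicative
    {H : Type*} [NormedAddCommGroup H] [InnerProductSpace ℂ H] [CompleteSpace H]
    {Ω : Type*} [MeasurableSpace Ω]
    (τ : Set Ω → (H →L[ℂ] H))
    (hτ_pos : ∀ X : Set Ω, MeasurableSet X → (τ X).IsPositive)
    (hτ_empty : τ ∅ = 0)
    (hτ_univ : τ Set.univ = 1)
    (hτ_add : ∀ X : ℕ → Set Ω, (∀ i, MeasurableSet (X i)) →
      Pairwise (Function.onFun Disjoint X) → ∀ φ : H,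
      HasSum (fun i => ⟪φ, τ (X i) φ⟫_ℂ) ⟪φ, τ (⋃ i, X i) φ⟫_ℂ) :
    (∀ X : Set Ω, MeasurableSet X → τ X ∘L τ X = τ X) ↔
      (∀ X Y : Set Ω, MeasurableSet X → MeasurableSet Y →
        τ (X ∩ Y) = τ X ∘L τ Y) := by
  constructor
  · intro hidem
    -- finite additivity
    have hadd2 : ∀ X Y : Set Ω, MeasurableSet X → MeasurableSet Y → Disjoint X Y →
        τ (X ∪ Y) = τ X + τ Y := by
      intro X Y hX hY hXY
      set f : ℕ → Set Ω := fun i => if i = 0 then X else if i = 1 then Y else ∅ with hf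
      have hfm : ∀ i, MeasurableSet (f i) := by
        intro i
        simp only [hf]
        split_ifs <;> first | exact hX | exact hY | exact MeasurableSet.empty
      have hfd : Pairwise (Function.onFun Disjoint f) := by
        intro i j hij
        simp only [Function.onFun, hf]
        split_ifs with h1 h2 h3 h4 h5 <;>
          simp_all [hXY, hXY.symm, Set.disjoint_empty, Set.empty_disjoint]
      have hU : (⋃ i, f i) = X ∪ Y := by
        apply Set.Subset.antisymm
        · refine Set.iUnion_subset fun i => ?_
          simp only [hf]
          split_ifs <;> simp [Set.subset_union_left, Set.subset_union_right]
        · intro x hx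
          rcases hx with hx | hx
          · exact Set.mem_iUnion.2 ⟨0, by simpa [hf] using hx⟩
          · exact Set.mem_iUnion.2 ⟨1, by simpa [hf] using hx⟩
      apply clm_ext_inner
      intro φ
      have h1 := hτ_add f hfm hfd φ
      have h2 : HasSum (fun i => ⟪φ, τ (f i) φ⟫_ℂ)
          (⟪φ, τ X φ⟫_ℂ + ⟪φ, τ Y φ⟫_ℂ) := by
        have hsupp : ∀ i ∉ ({0, 1} : Finset ℕ), ⟪φ, τ (f i) φ⟫_ℂ = 0 := by
          intro i hi
          simp only [Finset.mem_insert, Finset.mem_singleton, not_or] at hi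
          simp [hf, hi.1, hi.2, hτ_empty]
        have : HasSum (fun i => ⟪φ, τ (f i) φ⟫_ℂ) (∑ i ∈ ({0, 1} : Finset ℕ), ⟪φ, τ (f i) φ⟫_ℂ) :=
          hasSum_sum_of_ne_finset_zero hsupp
        simpa [hf, Finset.sum_insert, Finset.mem_singleton] using this
      have := h1.unique h2
      rw [hU] at this
      simp [this, inner_add_right]
    -- orthogonality of disjoint projections
    have horth : ∀ X Y : Set Ω, MeasurableSet X → MeasurableSet Y → Disjoint X Y →
        τ X * τ Y = 0 := by
      intro X Y hX hY hXY
      set P := τ X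
      set Q := τ Y
      have hP : P * P = P := hidem X hX
      have hQ : Q * Q = Q := hidem Y hY
      have hPQ : (P + Q) * (P + Q) = P + Q := by
        rw [← hadd2 X Y hX hY hXY]; exact hidem _ (hX.union hY)
      have key : P * Q + Q * P = 0 := by
        have h : P * P + (P * Q + Q * P) + Q * Q = P + Q := by
          rw [← hPQ]; noncomm_ring
        rw [hP, hQ] at h
        calc P * Q + Q * P = (P + (P * Q + Q * P) + Q) - (P + Q) := by abel
          _ = 0 := by rw [h, sub_self]
      have e1 : P * Q + P * Q * P = 0 := by
        have := congrArg (fun A => P * A) key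
        simpa [mul_add, ← mul_assoc, hP] using this
      have e2 : P * Q * P + Q * P = 0 := by
        have := congrArg (fun A => A * P) key
        simpa [add_mul, mul_assoc, hP] using this
      have hcomm : P * Q = Q * P :=
        (eq_neg_of_add_eq_zero_left e1).trans (eq_neg_of_add_eq_zero_right e2).symm
      have h2 : P * Q + P * Q = 0 := by rw [← hcomm] at key; exact key
      have : (2 : ℂ) • (P * Q) = 0 := by rw [two_smul]; exact h2
      simpa using (smul_eq_zero.mp this).resolve_left (by norm_num)
    intro X Y hX hY
    have hXd : τ X = τ (X ∩ Y) + τ (X \ Y) := by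
      rw [← hadd2 _ _ (hX.inter hY) (hX.diff hY) (Set.disjoint_of_subset_left
        Set.inter_subset_right Set.disjoint_sdiff_right), Set.inter_union_diff]
    have hYd : τ Y = τ (X ∩ Y) + τ (Y \ X) := by
      rw [← hadd2 _ _ (hX.inter hY) (hY.diff hX) (Set.disjoint_of_subset_left
        Set.inter_subset_left Set.disjoint_sdiff_right), Set.inter_comm,
        Set.inter_union_diff]
    have c1 : τ (X ∩ Y) * τ (Y \ X) = 0 :=
      horth _ _ (hX.inter hY) (hY.diff hX)
        (Set.disjoint_of_subset_left Set.inter_subset_left Set.disjoint_sdiff_right)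
    have c2 : τ (X \ Y) * τ (X ∩ Y) = 0 :=
      horth _ _ (hX.diff hY) (hX.inter hY)
        (Set.disjoint_of_subset_right Set.inter_subset_right Set.disjoint_sdiff_left)
    have c3 : τ (X \ Y) * τ (Y \ X) = 0 :=
      horth _ _ (hX.diff hY) (hY.diff hX)
        (Set.disjoint_sdiff_right.mono_left Set.diff_subset)
    have hsq : τ (X ∩ Y) * τ (X ∩ Y) = τ (X ∩ Y) := hidem _ (hX.inter hY)
    show τ (X ∩ Y) = τ X * τ Y
    rw [hXd, hYd]
    rw [add_mul, mul_add, mul_add, hsq, c1, c2, c3]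
    simp
  · intro hmul X hX
    exact (hmul X X hX hX).symm.trans (by rw [Set.inter_self])
end
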